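/- arXiv:2309.08841 — 11 statements merged into one kernel-verified Lean document; each statement's English description precedes it below -/
import Mathlib

section
/- For all n ≥ 0, the sequence A(n) := ((n+2)!/(n+1)) · Σ_{i=0}^{n+2} (-1)^i/i! satisfies the recurrence A(n) = n·A(n-1) + (n-1)·A(n-2) for n ≥ 2, with A(0) = A(1) = 1. -/
open Finset

/-- A(n) := ((n+2)!/(n+1)) · Σ_{i=0}^{n+2} (-1)^i/i!. -/
noncomputable def Areal (n : ℕ) : ℝ :=
  ((Nat.factorial (n + 2) : ℝ) / (n + 1)) * ∑ i ∈ Finset.range (n + 3), (-1 : ℝ) ^ i / (Nat.factorial i)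

noncomputable def Dreal (m : ℕ) : ℝ :=
  (Nat.factorial m : ℝ) * ∑ i ∈ Finset.range (m + 1), (-1 : ℝ) ^ i / (Nat.factorial i)

lemma Dreal_key (m : ℕ) : Dreal (m + 1) = (m + 1) * Dreal m + (-1 : ℝ) ^ (m + 1) := by
  have hf : (Nat.factorial (m + 1) : ℝ) ≠ 0 := by positivity
  unfold Dreal
  rw [Finset.sum_range_succ, mul_add, Nat.factorial_succ]
  push_cast
  field_simp

lemma Dreal_rec (m : ℕ) : Dreal (m + 2) = (m + 1) * (Dreal (m + 1) + Dreal m) := by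
  have h1 := Dreal_key m
  have h2 := Dreal_key (m + 1)
  rw [h2, h1]
  push_cast
  ring_nf

lemma Areal_eq (n : ℕ) : Areal n = Dreal (n + 2) / (n + 1) := by
  unfold Areal Dreal
  ring

theorem stmt0 :
    (∀ n : ℕ, 2 ≤ n → Areal n = n * Areal (n - 1) + (n - 1) * Areal (n - 2)) ∧
    Areal 0 = 1 ∧ Areal 1 = 1 := by
  refine ⟨?_, ?_, ?_⟩
  · rintro n hn
    obtain ⟨k, rfl⟩ : ∃ k, n = k + 2 := ⟨n - 2, by omega⟩
    simp only [show k + 2 - 1 = k + 1 from rfl, show k + 2 - 2 = k from rfl]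
    rw [Areal_eq, Areal_eq, Areal_eq]
    have h := Dreal_rec (k + 2)
    have h1 : (k : ℝ) + 1 + 1 ≠ 0 := by positivity
    have h2 : (k : ℝ) + 1 ≠ 0 := by positivity
    have h3 : (k : ℝ) + 1 + 1 + 1 ≠ 0 := by positivity
    simp only [show k + 2 + 2 = k + 4 from by omega, show k + 1 + 2 = k + 3 from by omega,
      show k + 2 + 1 = k + 3 from by omega] at h ⊢
    rw [h]
    push_cast
    field_simp
    ring
  · norm_num [Areal, Finset.sum_range_succ, Nat.factorial]
  · norm_num [Areal, Finset.sum_range_succ, Nat.factorial]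
end

section
/- The exponential generating function of A(n) satisfies Σ_{n≥0} A(n) x^n / n! = e^{-x}/(1-x)^2 as an identity of formal power series (equivalently, for |x| < 1). -/
open Finset Filter

/-- Sequence A000255: A(0)=A(1)=1, A(n)=n·A(n-1)+(n-1)·A(n-2). -/
def A : ℕ → ℕ
  | 0 => 1
  | 1 => 1
  | n + 2 => (n + 2) * A (n + 1) + (n + 1) * A n

/-- A(n,k) := C(n-1,k-1)·A(k-1). -/
def Ank (n k : ℕ) : ℕ := Nat.choose (n - 1) (k - 1) * A (k - 1)

open Nat in
lemma A_eq_derangements (n : ℕ) :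
    A n = numDerangements (n + 1) + numDerangements n := by
  induction n using Nat.twoStepInduction with
  | zero => rfl
  | one => rfl
  | more n ih1 ih2 =>
    have h1 := numDerangements_add_two (n + 1)
    have h2 := numDerangements_add_two n
    show A (n + 2) = _
    rw [A, ih1, ih2, h1, h2]
    ring

lemma A_succ_eq (n : ℕ) :
    A (n + 1) = (n + 1) * A n + numDerangements (n + 1) := by
  have h := numDerangements_add_two n
  rw [A_eq_derangements (n + 1), A_eq_derangements n, h]
  ring

lemma Dsum (n : ℕ) :
    ∑ k ∈ range (n + 1), ((-1 : ℝ) ^ k * ((Nat.factorial n : ℝ) / (Nat.factorial k : ℝ)))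
      = (numDerangements n : ℝ) := by
  induction n with
  | zero => simp [numDerangements]
  | succ n ih =>
    have hd : ((numDerangements (n + 1) : ℤ) : ℝ)
        = ((n + 1 : ℕ) : ℝ) * (numDerangements n : ℝ) - (-1 : ℝ) ^ n := by
      rw [numDerangements_succ]
      push_cast
      ring
    push_cast at hd
    rw [Finset.sum_range_succ]
    have hstep : ∑ k ∈ range (n + 1),
        ((-1 : ℝ) ^ k * ((Nat.factorial (n + 1) : ℝ) / (Nat.factorial k : ℝ)))
        = ((n : ℝ) + 1) * ∑ k ∈ range (n + 1),
            ((-1 : ℝ) ^ k * ((Nat.factorial n : ℝ) / (Nat.factorial k : ℝ))) := by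
      rw [Finset.mul_sum]
      refine Finset.sum_congr rfl fun k _ => ?_
      rw [Nat.factorial_succ]
      push_cast
      ring
    rw [hstep, ih, div_self (by positivity)]
    rw [hd]
    ring

lemma Ssum (n : ℕ) :
    ∑ k ∈ range (n + 1),
        ((-1 : ℝ) ^ k * ((n : ℝ) + 1 - k) * ((Nat.factorial n : ℝ) / (Nat.factorial k : ℝ)))
      = (A n : ℝ) := by
  induction n with
  | zero => simp [A]
  | succ n ih =>
    -- S(n+1) = (n+1) * S(n) + Dsum(n+1)
    have key : ∑ k ∈ range (n + 2),
        ((-1 : ℝ) ^ k * ((n : ℝ) + 2 - k) * ((Nat.factorial (n + 1) : ℝ) / (Nat.factorial k : ℝ)))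
        = ((n : ℝ) + 1) * ∑ k ∈ range (n + 1),
            ((-1 : ℝ) ^ k * ((n : ℝ) + 1 - k) * ((Nat.factorial n : ℝ) / (Nat.factorial k : ℝ)))
          + ∑ k ∈ range (n + 2),
            ((-1 : ℝ) ^ k * ((Nat.factorial (n + 1) : ℝ) / (Nat.factorial k : ℝ))) := by
      have split : ∀ k : ℕ,
          ((-1 : ℝ) ^ k * ((n : ℝ) + 2 - k) * ((Nat.factorial (n + 1) : ℝ) / (Nat.factorial k : ℝ)))
          = ((-1 : ℝ) ^ k * ((n : ℝ) + 1 - k) * ((Nat.factorial (n + 1) : ℝ) / (Nat.factorial k : ℝ)))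
            + ((-1 : ℝ) ^ k * ((Nat.factorial (n + 1) : ℝ) / (Nat.factorial k : ℝ))) := by
        intro k; ring
      rw [Finset.sum_congr rfl fun k _ => split k, Finset.sum_add_distrib]
      congr 1
      rw [Finset.sum_range_succ]
      have hz : ((-1 : ℝ) ^ (n + 1) * ((n : ℝ) + 1 - (n + 1 : ℕ))
          * ((Nat.factorial (n + 1) : ℝ) / (Nat.factorial (n + 1) : ℝ))) = 0 := by
        push_cast; ring_nf
      rw [hz, add_zero, Finset.mul_sum]
      refine Finset.sum_congr rfl fun k _ => ?_
      rw [Nat.factorial_succ]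
      push_cast
      ring
    rw [show ((n : ℕ) + 1 : ℕ) = n + 1 from rfl]
    have : ((n + 1 : ℕ) : ℝ) + 1 = (n : ℝ) + 2 := by push_cast; ring
    calc ∑ k ∈ range (n + 1 + 1),
          ((-1 : ℝ) ^ k * (((n + 1 : ℕ) : ℝ) + 1 - k)
            * ((Nat.factorial (n + 1) : ℝ) / (Nat.factorial k : ℝ)))
        = ∑ k ∈ range (n + 2),
          ((-1 : ℝ) ^ k * ((n : ℝ) + 2 - k)
            * ((Nat.factorial (n + 1) : ℝ) / (Nat.factorial k : ℝ))) := by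
          refine Finset.sum_congr rfl fun k _ => ?_; push_cast; ring
      _ = ((n : ℝ) + 1) * (A n : ℝ) + (numDerangements (n + 1) : ℝ) := by
          rw [key, ih, Dsum]
      _ = (A (n + 1) : ℝ) := by
          rw [A_succ_eq]; push_cast; ring

theorem stmt1 (x : ℝ) (hx : |x| < 1) :
    ∑' n : ℕ, (A n : ℝ) * x ^ n / (Nat.factorial n) = Real.exp (-x) / (1 - x) ^ 2 := by
  have hx' : ‖x‖ < 1 := by rwa [Real.norm_eq_abs]
  set f : ℕ → ℝ := fun k => (-1) ^ k * x ^ k / Nat.factorial k with hf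
  set g : ℕ → ℝ := fun l => ((l : ℝ) + 1) * x ^ l with hg
  have hfn : Summable fun k => ‖f k‖ := by
    have := Real.summable_pow_div_factorial |x|
    refine this.congr fun k => ?_
    simp [hf, abs_div, abs_mul, abs_pow, abs_abs, Nat.abs_cast]
  have hgn : Summable fun l => ‖g l‖ := by
    have h1 : Summable fun l : ℕ => (l : ℝ) * ‖x‖ ^ l := by
      have := (summable_pow_mul_geometric_of_norm_lt_one 1 hx' (R := ℝ)).abs
      refine this.congr fun l => ?_
      simp [abs_mul, abs_pow, Real.norm_eq_abs, abs_abs]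
    have h2 : Summable fun l : ℕ => ‖x‖ ^ l := summable_geometric_of_lt_one (norm_nonneg x) hx'
    refine (h1.add h2).congr fun l => ?_
    simp only [hg, norm_mul, norm_pow, Real.norm_eq_abs]
    rw [abs_of_nonneg (by positivity : (0:ℝ) ≤ (l : ℝ) + 1)]
    ring
  -- Cauchy product
  have cauchy := tsum_mul_tsum_eq_tsum_sum_antidiagonal_of_summable_norm hfn hgn
  -- f sums to exp(-x)
  have hfsum : ∑' k, f k = Real.exp (-x) := by
    rw [Real.exp_eq_exp_ℝ, NormedSpace.exp_eq_tsum_div]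
    refine tsum_congr fun k => ?_
    rw [hf, neg_pow]
  -- g sums to 1/(1-x)^2
  have hx1 : (1 : ℝ) - x ≠ 0 := by
    intro h
    rw [sub_eq_zero] at h
    rw [← h] at hx
    simp at hx
  have hgsum : ∑' l, g l = 1 / (1 - x) ^ 2 := by
    have h1 : ∑' l : ℕ, (l : ℝ) * x ^ l = x / (1 - x) ^ 2 :=
      tsum_coe_mul_geometric_of_norm_lt_one hx'
    have h2 : ∑' l : ℕ, x ^ l = (1 - x)⁻¹ := tsum_geometric_of_norm_lt_one hx'
    have hs1 : Summable fun l : ℕ => (l : ℝ) * x ^ l :=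
      by simpa using summable_pow_mul_geometric_of_norm_lt_one 1 hx'
    have hs2 : Summable fun l : ℕ => (x : ℝ) ^ l := summable_geometric_of_norm_lt_one hx'
    have : ∑' l : ℕ, g l = ∑' l : ℕ, ((l : ℝ) * x ^ l + x ^ l) := by
      refine tsum_congr fun l => ?_; simp [hg]; ring
    rw [this, Summable.tsum_add hs1 hs2, h1, h2]
    field_simp
    ring
  -- the antidiagonal sums are the coefficients
  have hcoef : ∀ n : ℕ, ∑ p ∈ Finset.HasAntidiagonal.antidiagonal n, f p.1 * g p.2
      = (A n : ℝ) * x ^ n / Nat.factorial n := by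
    intro n
    rw [Finset.Nat.sum_antidiagonal_eq_sum_range_succ (fun k l => f k * g l)]
    have : ∀ k ∈ range (n + 1), f k * g (n - k)
        = ((-1 : ℝ) ^ k * ((n : ℝ) + 1 - k) * ((Nat.factorial n : ℝ) / (Nat.factorial k : ℝ)))
          * (x ^ n / Nat.factorial n) := by
      intro k hk
      have hkn : k ≤ n := Nat.lt_succ_iff.mp (Finset.mem_range.mp hk)
      have hxx : x ^ k * x ^ (n - k) = x ^ n := by
        rw [← pow_add, Nat.add_sub_cancel' hkn]
      have hcast : ((n - k : ℕ) : ℝ) = (n : ℝ) - k := by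
        push_cast [hkn]; ring
      simp only [hf, hg, hcast]
      field_simp
      rw [← hxx]
      ring
    rw [Finset.sum_congr rfl this, ← Finset.sum_mul, Ssum]
    ring
  calc ∑' n : ℕ, (A n : ℝ) * x ^ n / Nat.factorial n
      = ∑' n : ℕ, ∑ p ∈ Finset.HasAntidiagonal.antidiagonal n, f p.1 * g p.2 := by
        exact (tsum_congr hcoef).symm
    _ = (∑' k, f k) * ∑' l, g l := cauchy.symm
    _ = Real.exp (-x) / (1 - x) ^ 2 := by
        rw [hfsum, hgsum]; field_simp
end

section
/- For every n ≥ 1, Σ_{k=1}^{n} A(n,k)/n! = 1, where A(n,k) = C(n-1, k-1)·A(k-1). -/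
open Finset Filter

lemma gsum : ∀ n : ℕ, ∑ k ∈ Finset.range (n + 1), (Nat.choose n k : ℤ) * numDerangements k
    = Nat.factorial n := by
  intro n
  induction n with
  | zero => simp
  | succ n ih =>
    rw [Finset.sum_range_succ']
    have h1 : ∀ k ∈ Finset.range (n + 1),
        (Nat.choose (n+1) (k+1) : ℤ) * numDerangements (k+1)
        = (n+1) * ((Nat.choose n k : ℤ) * numDerangements k)
          + (-1)^(k+1) * Nat.choose (n+1) (k+1) := by
      intro k _
      rw [numDerangements_succ]
      have h2 : ((n:ℤ)+1) * (Nat.choose n k : ℤ) = (Nat.choose (n+1) (k+1) : ℤ) * (k+1) := by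
        exact_mod_cast Nat.add_one_mul_choose_eq n k
      linear_combination (-(numDerangements k : ℤ)) * h2
    rw [Finset.sum_congr rfl h1, Finset.sum_add_distrib, ← Finset.mul_sum, ih]
    have h3 : ∑ k ∈ Finset.range (n + 1), (-1:ℤ)^(k+1) * Nat.choose (n+1) (k+1) = -1 := by
      have := Int.alternating_sum_range_choose_of_ne (n := n+1) (by omega)
      rw [Finset.sum_range_succ'] at this
      simp at this
      linarith
    rw [h3]
    simp [Nat.factorial_succ]

lemma A_eq (n : ℕ) : A n = numDerangements n + numDerangements (n + 1) := by
  induction n using Nat.strong_induction_on with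
  | _ n ih =>
    match n with
    | 0 => decide
    | 1 => decide
    | n + 2 =>
      rw [show n + 2 + 1 = n + 1 + 2 from rfl, numDerangements_add_two,
        numDerangements_add_two, A, ih (n+1) (by omega), ih n (by omega)]
      ring

lemma key (m : ℕ) : ∑ k ∈ Finset.range (m + 1), (Nat.choose m k : ℤ) * numDerangements (k+1)
    = Nat.factorial (m + 1) - Nat.factorial m := by
  have h := gsum (m + 1)
  rw [Finset.sum_range_succ'] at h
  have h1 : ∀ k ∈ Finset.range (m + 1),
      (Nat.choose (m+1) (k+1) : ℤ) * numDerangements (k+1)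
      = (Nat.choose m k : ℤ) * numDerangements (k+1)
        + (Nat.choose m (k+1) : ℤ) * numDerangements (k+1) := by
    intro k _
    have : Nat.choose (m+1) (k+1) = Nat.choose m k + Nat.choose m (k+1) := Nat.choose_succ_succ m k
    rw [this]; push_cast; ring
  rw [Finset.sum_congr rfl h1, Finset.sum_add_distrib] at h
  have h2 : ∑ k ∈ Finset.range (m + 1), (Nat.choose m (k+1) : ℤ) * numDerangements (k+1)
      = Nat.factorial m - 1 := by
    have hg := gsum m
    rw [Finset.sum_range_succ'] at hg
    have : ∑ k ∈ Finset.range (m+1), (Nat.choose m (k+1) : ℤ) * numDerangements (k+1)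
        = ∑ k ∈ Finset.range m, (Nat.choose m (k+1) : ℤ) * numDerangements (k+1) := by
      rw [Finset.sum_range_succ]
      simp
    rw [this]
    simp at hg
    linarith
  simp at h
  linarith

lemma natsum (m : ℕ) : ∑ k ∈ Finset.range (m + 1), Nat.choose m k * A k
    = Nat.factorial (m + 1) := by
  have : (∑ k ∈ Finset.range (m + 1), (Nat.choose m k * A k : ℤ))
      = Nat.factorial (m + 1) := by
    have h1 : ∀ k ∈ Finset.range (m+1), (Nat.choose m k * A k : ℤ)
        = (Nat.choose m k : ℤ) * numDerangements k
          + (Nat.choose m k : ℤ) * numDerangements (k+1) := by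
      intro k _
      rw [A_eq k]; push_cast; ring
    rw [Finset.sum_congr rfl h1, Finset.sum_add_distrib, gsum, key]
    ring
  exact_mod_cast this

theorem stmt2 (n : ℕ) (hn : 1 ≤ n) :
    ∑ k ∈ Finset.Icc 1 n, (Ank n k : ℝ) / (Nat.factorial n) = 1 := by
  obtain ⟨m, rfl⟩ : ∃ m, n = m + 1 := ⟨n - 1, by omega⟩
  have hsum : ∑ k ∈ Finset.Icc 1 (m+1), Ank (m+1) k = Nat.factorial (m+1) := by
    rw [← Finset.Ico_add_one_right_eq_Icc, Finset.sum_Ico_eq_sum_range, ← natsum m]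
    apply Finset.sum_congr (by norm_num)
    intro k _
    simp [Ank]
  rw [← Finset.sum_div, ← Nat.cast_sum, hsum, div_self]
  positivity
end

section
/- For every n ≥ 1 and every z, Σ_{k=1}^{n} (A(n,k)/n!)·z^k = Σ_{m=0}^{n-1} ((n-m)/(n·m!))·z^{n-m}·(1-z)^m. -/
open Finset Filter

lemma E_eq (m : ℕ) :
    ∑ i ∈ range (m+1), (-1:ℝ)^i * ((m:ℝ)+1-i) / i.factorial
      = ((m:ℝ)+2) * ∑ i ∈ range (m+3), (-1:ℝ)^i / i.factorial := by
  induction m with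
  | zero =>
    norm_num [Finset.sum_range_succ, Nat.factorial]
  | succ m ih =>
    have h1 : ∑ i ∈ range (m+2), (-1:ℝ)^i * ((m:ℝ)+1+1-i) / i.factorial
        = (∑ i ∈ range (m+2), (-1:ℝ)^i * ((m:ℝ)+1-i) / i.factorial)
          + ∑ i ∈ range (m+2), (-1:ℝ)^i / i.factorial := by
      rw [← Finset.sum_add_distrib]
      apply Finset.sum_congr rfl
      intro i _
      have : (i.factorial : ℝ) ≠ 0 := Nat.cast_ne_zero.mpr i.factorial_ne_zero
      field_simp
      ring
    have h2 : ∑ i ∈ range (m+2), (-1:ℝ)^i * ((m:ℝ)+1-i) / i.factorial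
        = ∑ i ∈ range (m+1), (-1:ℝ)^i * ((m:ℝ)+1-i) / i.factorial := by
      rw [Finset.sum_range_succ]
      push_cast
      ring_nf
    push_cast
    rw [h1, h2, ih]
    rw [Finset.sum_range_succ ((fun i => (-1:ℝ)^i / i.factorial)) (m+3),
        Finset.sum_range_succ ((fun i => (-1:ℝ)^i / i.factorial)) (m+2)]
    have hf3 : ((m+3).factorial : ℝ) = (m+3) * (m+2).factorial := by
      rw [Nat.factorial_succ]; push_cast; ring
    have : ((m+2).factorial : ℝ) ≠ 0 := Nat.cast_ne_zero.mpr (Nat.factorial_ne_zero _)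
    rw [hf3]
    push_cast
    field_simp
    ring

lemma A_formula (m : ℕ) :
    (A m : ℝ) = m.factorial * ∑ i ∈ range (m+1), (-1:ℝ)^i * ((m:ℝ)+1-i) / i.factorial := by
  induction m using Nat.twoStepInduction with
  | zero => norm_num [A, Nat.factorial]
  | one => norm_num [A, Finset.sum_range_succ, Nat.factorial]
  | more m ih ih1 =>
    have hrec : (A (m+2) : ℝ) = (m+2) * A (m+1) + (m+1) * A m := by
      rw [show A (m+2) = (m+2) * A (m+1) + (m+1) * A m from rfl]; push_cast; ring
    rw [hrec, ih, ih1]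
    -- goal: (m+2)*( (m+1)! * g(m+1) ) + (m+1)*( m! * g(m) ) = (m+2)! * g(m+2)
    have key : ∑ i ∈ range (m+3), (-1:ℝ)^i * ((m:ℝ)+2+1-i) / i.factorial
        = (∑ i ∈ range (m+2), (-1:ℝ)^i * ((m:ℝ)+1+1-i) / i.factorial)
          + (1/((m:ℝ)+2)) * ∑ i ∈ range (m+1), (-1:ℝ)^i * ((m:ℝ)+1-i) / i.factorial := by
      rw [E_eq m]
      have h1 : ∑ i ∈ range (m+3), (-1:ℝ)^i * ((m:ℝ)+2+1-i) / i.factorial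
          = (∑ i ∈ range (m+3), (-1:ℝ)^i * ((m:ℝ)+1+1-i) / i.factorial)
            + ∑ i ∈ range (m+3), (-1:ℝ)^i / i.factorial := by
        rw [← Finset.sum_add_distrib]
        apply Finset.sum_congr rfl
        intro i _
        have : (i.factorial : ℝ) ≠ 0 := Nat.cast_ne_zero.mpr i.factorial_ne_zero
        field_simp; ring
      have h2 : ∑ i ∈ range (m+3), (-1:ℝ)^i * ((m:ℝ)+1+1-i) / i.factorial
          = ∑ i ∈ range (m+2), (-1:ℝ)^i * ((m:ℝ)+1+1-i) / i.factorial := by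
        rw [Finset.sum_range_succ]
        have hz : (-1:ℝ)^(m+2) * ((m:ℝ)+1+1-((m+2:ℕ):ℝ)) / ((m+2:ℕ).factorial) = 0 := by
          push_cast; ring
        rw [hz, add_zero]
      rw [h1, h2]
      have h2ne : ((m:ℝ)+2) ≠ 0 := by positivity
      field_simp
    push_cast
    simp only [show m+1+1 = m+2 from rfl, show m+2+1 = m+3 from rfl]
    rw [key]
    have hf1 : ((m+2).factorial : ℝ) = ((m:ℝ)+2) * (m+1).factorial := by
      rw [Nat.factorial_succ]; push_cast; ring
    have hf2 : ((m+1).factorial : ℝ) = ((m:ℝ)+1) * m.factorial := by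
      rw [Nat.factorial_succ]; push_cast; ring
    have h2ne : ((m:ℝ)+2) ≠ 0 := by positivity
    push_cast
    rw [hf1, hf2]
    field_simp

lemma coeff (N K : ℕ) (hk : K ≤ N) (z : ℝ) :
    (Ank (N+1) (K+1) : ℝ) / ((N+1).factorial) * z^(K+1)
      = ∑ j ∈ Icc 1 (K+1),
          (-1:ℝ)^(K+1-j) * j / ((N+1) * ((K+1-j).factorial) * ((N+1-(K+1)).factorial)) * z^(K+1) := by
  simp only [show N + 1 - (K + 1) = N - K by omega]
  have hAnk : Ank (N+1) (K+1) = Nat.choose N K * A K := by simp [Ank]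
  rw [hAnk]
  rw [show (((Nat.choose N K * A K : ℕ)) : ℝ) = (Nat.choose N K : ℝ) * (A K : ℝ) by push_cast; ring]
  rw [A_formula]
  rw [Finset.sum_nbij' (i := fun (j : ℕ) => K + 1 - j) (j := fun (i : ℕ) => K + 1 - i)
    (s := Icc 1 (K+1)) (t := range (K+1))
    (f := fun j => (-1:ℝ)^(K+1-j) * j / ((N+1) * ((K+1-j).factorial) * ((N-K).factorial)) * z^(K+1))
    (g := fun i => (-1:ℝ)^i * ((K+1-i : ℕ):ℝ) / ((N+1) * (i.factorial) * ((N-K).factorial)) * z^(K+1))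
    (by intro a ha; simp at ha ⊢; omega)
    (by intro a ha; simp at ha ⊢; omega)
    (by intro a ha; simp at ha ⊢; omega)
    (by intro a ha; simp at ha ⊢; omega)
    (by intro j hj
        simp only [mem_Icc] at hj
        have h1 : K + 1 - (K + 1 - j) = j := by omega
        simp only [h1])]
  rw [Finset.mul_sum, Finset.mul_sum, Finset.sum_div, Finset.sum_mul]
  apply Finset.sum_congr rfl
  intro i hi
  simp only [mem_range] at hi
  have hC : ((N.choose K : ℕ) : ℝ) = (N.factorial : ℝ) / (K.factorial * (N - K).factorial) :=
    Nat.cast_choose ℝ hk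
  have hN1 : (((N+1).factorial : ℕ) : ℝ) = ((N:ℝ)+1) * N.factorial := by
    rw [Nat.factorial_succ]; push_cast; ring
  have hcast : ((K + 1 - i : ℕ) : ℝ) = (K:ℝ) + 1 - i := by
    have : i ≤ K + 1 := by omega
    push_cast [this]; ring
  rw [hC, hN1, hcast]
  have h1 : (K.factorial : ℝ) ≠ 0 := Nat.cast_ne_zero.mpr (Nat.factorial_ne_zero _)
  have h2 : ((N-K).factorial : ℝ) ≠ 0 := Nat.cast_ne_zero.mpr (Nat.factorial_ne_zero _)
  have h3 : (N.factorial : ℝ) ≠ 0 := Nat.cast_ne_zero.mpr (Nat.factorial_ne_zero _)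
  have h4 : (i.factorial : ℝ) ≠ 0 := Nat.cast_ne_zero.mpr (Nat.factorial_ne_zero _)
  have h5 : ((N:ℝ)+1) ≠ 0 := by positivity
  field_simp

lemma expand (N j : ℕ) (hj1 : 1 ≤ j) (hj2 : j ≤ N+1) (z : ℝ) :
    (j:ℝ) / ((N+1) * ((N+1-j).factorial)) * z^j * (1-z)^(N+1-j)
      = ∑ k ∈ Icc j (N+1),
          (-1:ℝ)^(k-j) * j / ((N+1) * ((k-j).factorial) * ((N+1-k).factorial)) * z^k := by
  rw [sub_pow (1:ℝ) z (N+1-j)]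
  rw [Finset.mul_sum]
  rw [Finset.sum_nbij' (i := fun (m : ℕ) => N + 1 - m) (j := fun (k : ℕ) => N + 1 - k)
    (s := range (N+1-j+1)) (t := Icc j (N+1))
    (f := fun m => (j:ℝ) / ((N+1) * ((N+1-j).factorial)) * z^j *
        ((-1:ℝ)^(m + (N+1-j)) * 1^m * z^(N+1-j-m) * ((N+1-j).choose m)))
    (g := fun k => (-1:ℝ)^(k-j) * j / ((N+1) * ((k-j).factorial) * ((N+1-k).factorial)) * z^k)
    (by intro a ha; simp at ha ⊢; omega)
    (by intro a ha; simp at ha ⊢; omega)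
    (by intro a ha; simp at ha ⊢; omega)
    (by intro a ha; simp at ha ⊢; omega)
    ?_]
  intro m hm
  simp only [mem_range] at hm
  simp only [one_pow, mul_one]
  -- k = N+1-m
  have hmle : m ≤ N + 1 - j := by omega
  have e1 : N + 1 - (N + 1 - m) = m := by omega
  have e2 : N + 1 - m - j = N + 1 - j - m := by omega
  have e3 : (N + 1 - j) - m ≤ N + 1 - j := by omega
  have hsign : (-1:ℝ)^(m + (N+1-j)) = (-1:ℝ)^(N + 1 - j - m) := by
    rw [neg_one_pow_eq_pow_mod_two, neg_one_pow_eq_pow_mod_two (n := N + 1 - j - m)]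
    congr 1
    omega
  have hchoose : (((N+1-j).choose m : ℕ) : ℝ)
      = ((N+1-j).factorial : ℝ) / ((m.factorial) * ((N+1-j-m).factorial)) :=
    Nat.cast_choose ℝ hmle
  have hz : z ^ j * z ^ (N+1-j-m) = z ^ (N + 1 - m) := by
    rw [← pow_add]
    congr 1
    omega
  simp only [e1, e2]
  rw [hsign, hchoose]
  have h1 : ((N+1-j).factorial : ℝ) ≠ 0 := Nat.cast_ne_zero.mpr (Nat.factorial_ne_zero _)
  have h2 : (m.factorial : ℝ) ≠ 0 := Nat.cast_ne_zero.mpr (Nat.factorial_ne_zero _)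
  have h3 : ((N+1-j-m).factorial : ℝ) ≠ 0 := Nat.cast_ne_zero.mpr (Nat.factorial_ne_zero _)
  have h5 : ((N:ℝ)+1) ≠ 0 := by positivity
  rw [← hz]
  field_simp

theorem stmt3 (n : ℕ) (hn : 1 ≤ n) (z : ℝ) :
    ∑ k ∈ Finset.Icc 1 n, (Ank n k : ℝ) / (Nat.factorial n) * z ^ k =
      ∑ m ∈ Finset.range n,
        ((n - m : ℕ) : ℝ) / (n * Nat.factorial m) * z ^ (n - m) * (1 - z) ^ m := by
  obtain ⟨N, rfl⟩ : ∃ N, n = N + 1 := ⟨n - 1, by omega⟩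
  have hR : ∑ m ∈ Finset.range (N+1),
        ((N + 1 - m : ℕ) : ℝ) / ((N+1 : ℕ) * Nat.factorial m) * z ^ (N + 1 - m) * (1 - z) ^ m
      = ∑ j ∈ Icc 1 (N+1),
          (j:ℝ) / ((N+1) * ((N+1-j).factorial)) * z^j * (1-z)^(N+1-j) := by
    apply Finset.sum_nbij' (i := fun m => N + 1 - m) (j := fun j => N + 1 - j)
      (by intro a ha; simp at ha ⊢; omega)
      (by intro a ha; simp at ha ⊢; omega)
      (by intro a ha; simp at ha ⊢; omega)
      (by intro a ha; simp at ha ⊢; omega)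
    intro m hm
    simp only [mem_range] at hm
    have e : N + 1 - (N + 1 - m) = m := by omega
    simp only [e]
    push_cast
    ring
  rw [hR]
  have hR2 : ∑ j ∈ Icc 1 (N+1),
        (j:ℝ) / ((N+1) * ((N+1-j).factorial)) * z^j * (1-z)^(N+1-j)
      = ∑ j ∈ Icc 1 (N+1), ∑ k ∈ Icc j (N+1),
          (-1:ℝ)^(k-j) * j / ((N+1) * ((k-j).factorial) * ((N+1-k).factorial)) * z^k := by
    apply Finset.sum_congr rfl
    intro j hj
    simp only [mem_Icc] at hj
    exact expand N j hj.1 hj.2 z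
  rw [hR2]
  have hswap : ∑ j ∈ Icc 1 (N+1), ∑ k ∈ Icc j (N+1),
          (-1:ℝ)^(k-j) * j / ((N+1) * ((k-j).factorial) * ((N+1-k).factorial)) * z^k
      = ∑ k ∈ Icc 1 (N+1), ∑ j ∈ Icc 1 k,
          (-1:ℝ)^(k-j) * j / ((N+1) * ((k-j).factorial) * ((N+1-k).factorial)) * z^k := by
    have h := Finset.sum_Ico_Ico_comm 1 (N+1+1)
      (fun j k => (-1:ℝ)^(k-j) * j / ((N+1) * ((k-j).factorial) * ((N+1-k).factorial)) * z^k)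
    simpa only [Finset.Ico_add_one_right_eq_Icc] using h
  rw [hswap]
  apply Finset.sum_congr rfl
  intro k hk
  simp only [mem_Icc] at hk
  obtain ⟨K, rfl⟩ : ∃ K, k = K + 1 := ⟨k - 1, by omega⟩
  exact coeff N K (by omega) z
end

section
/- As formal power series in x and z: Σ_{n≥1} (Σ_{k=1}^{n} (A(n,k)/n!)·z^k)·n·x^n = x·z·e^{x(1-z)}/(1-xz)^2. -/
open Finset Filter

noncomputable def E (m : ℕ) : ℝ := ∑ k ∈ Finset.range m, (-1) ^ k / (Nat.factorial k)

lemma E_succ (m : ℕ) : E (m + 1) = E m + (-1) ^ m / (Nat.factorial m) := by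
  rw [E, E, Finset.sum_range_succ]

lemma fact_ne (m : ℕ) : ((Nat.factorial m : ℝ)) ≠ 0 := by
  exact_mod_cast (Nat.factorial_pos m).ne'

lemma A_le : ∀ n, A n ≤ Nat.factorial (n + 1)
  | 0 => by simp [A]
  | 1 => by simp [A, Nat.factorial]
  | n + 2 => by
    have h1 := A_le (n + 1)
    have h2 := A_le n
    show (n + 2) * A (n + 1) + (n + 1) * A n ≤ Nat.factorial (n + 3)
    have e : Nat.factorial (n + 3) = (n+3)*((n+2)*Nat.factorial (n+1)) := by
      rw [Nat.factorial_succ, Nat.factorial_succ]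
    have e2 : Nat.factorial (n + 2) = (n+2)*Nat.factorial (n+1) := Nat.factorial_succ _
    nlinarith [Nat.factorial_pos (n+1)]

lemma A_key : ∀ n : ℕ, (A n : ℝ) / (Nat.factorial n) = (n + 2) * E (n + 3)
  | 0 => by
    have hE : E 3 = 1/2 := by norm_num [E, Finset.sum_range_succ, Nat.factorial]
    norm_num [A, hE]
  | 1 => by
    have hE : E 4 = 1/3 := by norm_num [E, Finset.sum_range_succ, Nat.factorial]
    norm_num [A, hE]
  | n + 2 => by
    have h1 := A_key (n + 1)
    have h2 := A_key n
    have hA : (A (n+2) : ℝ) = (n + 2) * A (n + 1) + (n + 1) * A n := by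
      show ((((n + 2) * A (n + 1) + (n + 1) * A n : ℕ)) : ℝ) = _
      push_cast; ring
    have e5 : E (n + 5) = E (n + 3) + (-1)^(n+3)/(Nat.factorial (n+3))
        + (-1)^(n+4)/(Nat.factorial (n+4)) := by
      rw [show n + 5 = (n+4)+1 from rfl, E_succ, show n+4 = (n+3)+1 from rfl, E_succ]
    have e4 : E (n + 4) = E (n + 3) + (-1)^(n+3)/(Nat.factorial (n+3)) := by
      rw [show n + 4 = (n+3)+1 from rfl, E_succ]
    have hA1 : (A (n+1) : ℝ) = Nat.factorial (n+1) * (((n:ℝ) + 3) * E (n + 4)) := by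
      field_simp at h1
      push_cast at h1 ⊢
      linarith [h1]
    have hA0 : (A n : ℝ) = Nat.factorial n * (((n:ℝ) + 2) * E (n + 3)) := by
      field_simp at h2
      push_cast at h2 ⊢
      linarith [h2]
    have goal2 : (A (n+2) : ℝ) / (Nat.factorial (n+2)) = ((n:ℝ) + 4) * E (n + 5) := by
      rw [hA, hA1, hA0, e5, e4]
      have f2 : (Nat.factorial (n+2) : ℝ) = ((n:ℝ)+2) * Nat.factorial (n+1) := by
        rw [Nat.factorial_succ]; push_cast; ring
      have f1 : (Nat.factorial (n+1) : ℝ) = ((n:ℝ)+1) * Nat.factorial n := by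
        rw [Nat.factorial_succ]; push_cast; ring
      have f3 : (Nat.factorial (n+3) : ℝ) = ((n:ℝ)+3) * Nat.factorial (n+2) := by
        rw [Nat.factorial_succ]; push_cast; ring
      have f4 : (Nat.factorial (n+4) : ℝ) = ((n:ℝ)+4) * Nat.factorial (n+3) := by
        rw [Nat.factorial_succ]; push_cast; ring
      have s1 : ((-1:ℝ))^(n+4) = ((-1))^(n+3) * (-1) := by ring
      have hn0 : ((Nat.factorial n : ℝ)) ≠ 0 := fact_ne n
      rw [f4, s1, f3, f2, f1]
      push_cast
      field_simp
      ring
    rw [show n + 2 + 3 = n + 5 from rfl]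
    push_cast
    convert goal2 using 2
    ring

lemma coeff_s4 : ∀ n : ℕ, ∑ k ∈ Finset.range (n+1), (-1)^k / (Nat.factorial k : ℝ) * ((n:ℝ) + 1 - k)
    = ((n:ℝ)+2) * E (n+3) := by
  intro n
  induction n with
  | zero => norm_num [E, Finset.sum_range_succ, Nat.factorial]
  | succ n ih =>
    have hsplit : ∑ k ∈ Finset.range (n+1+1), (-1)^k / (Nat.factorial k : ℝ) * ((n:ℝ) + 1 + 1 - k)
        = (∑ k ∈ Finset.range (n+1), (-1)^k / (Nat.factorial k : ℝ) * ((n:ℝ) + 1 - k)) + E (n+2) := by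
      have h1 : ∀ k ∈ Finset.range (n+1+1), (-1:ℝ)^k / (Nat.factorial k : ℝ) * ((n:ℝ) + 1 + 1 - k)
          = (-1)^k / (Nat.factorial k : ℝ) * ((n:ℝ) + 1 - k) + (-1)^k / (Nat.factorial k : ℝ) := by
        intro k _; ring
      rw [Finset.sum_congr rfl h1, Finset.sum_add_distrib]
      congr 1
      rw [Finset.sum_range_succ]
      have h0 : ((n:ℝ) + 1 - ((n+1:ℕ):ℝ)) = 0 := by push_cast; ring
      rw [h0, mul_zero, add_zero]
    push_cast
    rw [hsplit, ih]
    have e2 : E (n+1+3) = E (n+3) + (-1)^(n+3) / (Nat.factorial (n+3) : ℝ) := E_succ (n+3)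
    have e1 : E (n+3) = E (n+2) + (-1)^(n+2) / (Nat.factorial (n+2) : ℝ) := E_succ (n+2)
    have f3 : (Nat.factorial (n+3) : ℝ) = ((n:ℝ)+3) * Nat.factorial (n+2) := by
      rw [show n+3 = n+2+1 from rfl, Nat.factorial_succ]; push_cast; ring
    have s : ((-1:ℝ))^(n+3) = -(-1)^(n+2) := by
      rw [show n+3 = n+2+1 from rfl, pow_succ]; ring
    rw [e2, e1, f3, s]
    have hn2 : ((Nat.factorial (n+2) : ℝ)) ≠ 0 := fact_ne (n+2)
    field_simp
    ring

lemma summable_aux {r : ℝ} (hr : |r| < 1) : Summable (fun n : ℕ => ((n:ℝ)+1) * |r|^n) := by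
  have h1 : Summable (fun n : ℕ => ((n:ℝ))^1 * |r|^n) :=
    summable_pow_mul_geometric_of_norm_lt_one 1 (by rwa [Real.norm_eq_abs, abs_abs])
  have h2 : Summable (fun n : ℕ => |r|^n) := summable_geometric_of_lt_one (abs_nonneg r) hr
  exact (h1.add h2).congr (fun n => by ring)

lemma egf {t : ℝ} (ht : |t| < 1) :
    ∑' n : ℕ, (A n : ℝ) * t ^ n / (Nat.factorial n) = Real.exp (-t) / (1 - t)^2 := by
  have htn : ‖t‖ < 1 := by rwa [Real.norm_eq_abs]
  have ht1 : (1:ℝ) - t ≠ 0 := by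
    have := abs_lt.1 ht; intro h; linarith [this.2]
  set f : ℕ → ℝ := fun k => (-t)^k / (Nat.factorial k) with hf
  set g : ℕ → ℝ := fun m => ((m:ℝ)+1) * t^m with hg
  have hfn : Summable fun k => ‖f k‖ := by
    refine (NormedSpace.expSeries_div_summable (|t|)).congr fun k => ?_
    simp [hf, abs_div, abs_pow, abs_neg]
  have hgn : Summable fun m => ‖g m‖ := by
    refine (summable_aux ht).congr fun m => ?_
    rw [Real.norm_eq_abs, abs_mul, abs_pow, abs_of_nonneg (by positivity : (0:ℝ) ≤ (m:ℝ)+1)]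
  have hexp : ∑' k, f k = Real.exp (-t) := by
    rw [Real.exp_eq_exp_ℝ, NormedSpace.exp_eq_tsum_div]
  have hgeo : ∑' m, g m = 1/(1-t)^2 := by
    have h1 : ∑' m : ℕ, (m:ℝ) * t^m = t/(1-t)^2 := tsum_coe_mul_geometric_of_norm_lt_one htn
    have h2 : ∑' m : ℕ, t^m = (1-t)⁻¹ := tsum_geometric_of_norm_lt_one htn
    have hs1 : Summable (fun m : ℕ => (m:ℝ)*t^m) :=
      (summable_pow_mul_geometric_of_norm_lt_one 1 htn).congr (fun m => by ring)
    have hs2 : Summable (fun m : ℕ => t^m) := summable_geometric_of_norm_lt_one htn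
    calc ∑' m, g m = ∑' m : ℕ, ((m:ℝ)*t^m + t^m) := tsum_congr fun m => by simp [hg]; ring
      _ = t/(1-t)^2 + (1-t)⁻¹ := by rw [Summable.tsum_add hs1 hs2, h1, h2]
      _ = 1/(1-t)^2 := by field_simp; ring
  have cauchy := tsum_mul_tsum_eq_tsum_sum_range_of_summable_norm hfn hgn
  rw [hexp, hgeo] at cauchy
  rw [show Real.exp (-t) / (1-t)^2 = Real.exp (-t) * (1/(1-t)^2) by ring, cauchy]
  refine tsum_congr fun n => ?_
  have step : ∑ k ∈ Finset.range (n+1), f k * g (n-k)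
      = ∑ k ∈ Finset.range (n+1), ((-1)^k / (Nat.factorial k : ℝ) * ((n:ℝ) + 1 - k)) * t^n := by
    refine Finset.sum_congr rfl fun k hk => ?_
    have hkn : k ≤ n := Nat.lt_succ_iff.mp (Finset.mem_range.mp hk)
    have hpow : t^k * t^(n-k) = t^n := by rw [← pow_add, Nat.add_sub_cancel' hkn]
    simp only [hf, hg]
    rw [Nat.cast_sub hkn, neg_pow]
    calc (-1:ℝ)^k * t^k / (Nat.factorial k) * ((((n:ℝ) - k) + 1) * t^(n-k))
        = ((-1:ℝ)^k / (Nat.factorial k) * ((n:ℝ) + 1 - k)) * (t^k * t^(n-k)) := by ring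
      _ = _ := by rw [hpow]
  rw [step, ← Finset.sum_mul, coeff_s4 n, ← A_key n]
  ring

theorem stmt4 (x z : ℝ) (hx : |x| < 1) (hxz : |x * z| < 1) :
    ∑' n : ℕ,
        (∑ k ∈ Finset.Icc 1 n, (Ank n k : ℝ) / (Nat.factorial n) * z ^ k) * n * x ^ n =
      x * z * Real.exp (x * (1 - z)) / (1 - x * z) ^ 2 := by
  have hxz1 : (1:ℝ) - x*z ≠ 0 := by
    have := abs_lt.1 hxz; intro h; linarith [this.2]
  set F : ℕ → ℝ := fun j => (A j : ℝ) * (x*z)^j / (Nat.factorial j) with hF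
  set G : ℕ → ℝ := fun i => x^i / (Nat.factorial i) with hG
  have hFn : Summable fun j => ‖F j‖ := by
    refine Summable.of_nonneg_of_le (fun j => norm_nonneg _) (fun j => ?_) (summable_aux hxz)
    have h1 : ‖F j‖ = (A j : ℝ) * |x*z|^j / (Nat.factorial j) := by
      rw [hF, Real.norm_eq_abs, abs_div, abs_mul, abs_pow, Nat.abs_cast, Nat.abs_cast]
    rw [h1]
    have h2 : (A j : ℝ) ≤ (Nat.factorial (j+1) : ℝ) := by exact_mod_cast A_le j
    calc (A j : ℝ) * |x*z|^j / (Nat.factorial j)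
        ≤ (Nat.factorial (j+1) : ℝ) * |x*z|^j / (Nat.factorial j) := by
          gcongr
      _ = ((j:ℝ)+1) * |x*z|^j := by
          rw [Nat.factorial_succ]; push_cast
          field_simp
  have hGn : Summable fun i => ‖G i‖ := by
    refine (NormedSpace.expSeries_div_summable (|x|)).congr fun i => ?_
    simp [hG, abs_div, abs_pow]
  have hTF : ∑' j, F j = Real.exp (-(x*z)) / (1 - x*z)^2 := egf hxz
  have hTG : ∑' i, G i = Real.exp x := by
    rw [hG, Real.exp_eq_exp_ℝ, NormedSpace.exp_eq_tsum_div]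
  have key : ∀ m : ℕ,
      (∑ k ∈ Finset.Icc 1 (m+1), (Ank (m+1) k : ℝ) / (Nat.factorial (m+1)) * z ^ k)
          * ((m+1 : ℕ) : ℝ) * x ^ (m+1)
        = (x*z) * ∑ j ∈ Finset.range (m+1), F j * G (m-j) := by
    intro m
    rw [← Finset.Ico_add_one_right_eq_Icc, Finset.sum_Ico_eq_sum_range]
    rw [show m+1+1-1 = m+1 from rfl]
    rw [Finset.sum_mul, Finset.sum_mul, Finset.mul_sum]
    refine Finset.sum_congr rfl fun j hj => ?_
    have hjm : j ≤ m := Nat.lt_succ_iff.mp (Finset.mem_range.mp hj)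
    have hAnk : Ank (m+1) (1+j) = Nat.choose m j * A j := by
      simp [Ank]
    have hc : (Nat.choose m j : ℝ) = (Nat.factorial m : ℝ) /
        ((Nat.factorial j : ℝ) * (Nat.factorial (m-j) : ℝ)) := by
      rw [eq_div_iff (by positivity), ← mul_assoc]
      exact_mod_cast Nat.choose_mul_factorial_mul_factorial hjm
    have hfm : (Nat.factorial (m+1) : ℝ) = ((m:ℝ)+1) * (Nat.factorial m : ℝ) := by
      rw [Nat.factorial_succ]; push_cast; ring
    have hxp : x ^ (m+1) = x * (x^j * x^(m-j)) := by
      rw [pow_succ, ← pow_add, Nat.add_sub_cancel' hjm]; ring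
    have hzp : z ^ (1+j) = z * z^j := by rw [pow_add, pow_one]
    rw [hAnk, hzp, hxp, hF, hG]
    push_cast [hc, hfm]
    have h1 : ((Nat.factorial j : ℝ)) ≠ 0 := fact_ne j
    have h2 : ((Nat.factorial (m-j) : ℝ)) ≠ 0 := fact_ne (m-j)
    have h3 : ((Nat.factorial m : ℝ)) ≠ 0 := fact_ne m
    have h4 : ((m:ℝ)+1) ≠ 0 := by positivity
    field_simp
    ring
  have hS : Summable fun m => ∑ j ∈ Finset.range (m+1), F j * G (m-j) :=
    (summable_norm_sum_mul_range_of_summable_norm hFn hGn).of_norm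
  have hsum1 : Summable (fun m : ℕ =>
      (∑ k ∈ Finset.Icc 1 (m+1), (Ank (m+1) k : ℝ) / (Nat.factorial (m+1)) * z ^ k)
        * ((m+1 : ℕ) : ℝ) * x ^ (m+1)) := by
    refine (hS.mul_left (x*z)).congr fun m => ?_
    exact (key m).symm
  have hsum : Summable (fun n : ℕ =>
      (∑ k ∈ Finset.Icc 1 n, (Ank n k : ℝ) / (Nat.factorial n) * z ^ k) * (n : ℝ) * x ^ n) := by
    refine (summable_nat_add_iff 1).mp ?_
    exact hsum1
  rw [Summable.tsum_eq_zero_add hsum]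
  have h0 : (∑ k ∈ Finset.Icc 1 0, (Ank 0 k : ℝ) / (Nat.factorial 0) * z ^ k) * ((0:ℕ) : ℝ) * x ^ 0 = 0 := by
    simp
  rw [h0, zero_add]
  calc ∑' m : ℕ, (∑ k ∈ Finset.Icc 1 (m+1), (Ank (m+1) k : ℝ) / (Nat.factorial (m+1)) * z ^ k)
          * ((m+1 : ℕ) : ℝ) * x ^ (m+1)
      = ∑' m : ℕ, (x*z) * ∑ j ∈ Finset.range (m+1), F j * G (m-j) := tsum_congr key
    _ = (x*z) * ∑' m : ℕ, ∑ j ∈ Finset.range (m+1), F j * G (m-j) := tsum_mul_left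
    _ = (x*z) * ((∑' j, F j) * (∑' i, G i)) := by
        rw [← tsum_mul_tsum_eq_tsum_sum_range_of_summable_norm hFn hGn]
    _ = x * z * Real.exp (x * (1 - z)) / (1 - x * z) ^ 2 := by
        rw [hTF, hTG, show x * (1 - z) = -(x*z) + x by ring, Real.exp_add]
        field_simp
end

section
/- For every nonnegative integer ℓ and every n ≥ ℓ (with n ≥ 1), Σ_{k=1}^{n} (A(n,k)/n!)·(n-k)^ℓ = B_ℓ − (B_{ℓ+1} − B_ℓ)/n, where B_ℓ denotes the ℓ-th Bell number. -/
open Finset Filter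

/-- Stirling numbers of the second kind. -/
def stirling2 : ℕ → ℕ → ℕ
  | 0, 0 => 1
  | 0, _ + 1 => 0
  | _ + 1, 0 => 0
  | n + 1, k + 1 => (k + 1) * stirling2 n (k + 1) + stirling2 n k

/-- Bell numbers: B_ℓ = Σ_{m=0}^{ℓ} S(ℓ,m). -/
def bell (ℓ : ℕ) : ℕ := ∑ m ∈ Finset.range (ℓ + 1), stirling2 ℓ m

/-! ### Auxiliary lemmas -/

lemma pascal_sum (M : ℕ) (X : ℕ → ℕ) :
    ∑ j ∈ range (M + 2), Nat.choose (M + 1) j * X j =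
      ∑ j ∈ range (M + 1), Nat.choose M j * X j +
        ∑ j ∈ range (M + 1), Nat.choose M j * X (j + 1) := by
  rw [Finset.sum_range_succ' (fun j => Nat.choose (M + 1) j * X j),
    Finset.sum_range_succ' (fun j => Nat.choose M j * X j)]
  simp only [Nat.choose_succ_succ', Nat.choose_zero_right]
  rw [Finset.sum_congr rfl (fun j _ => by rw [Nat.add_mul] :
    ∀ j ∈ range (M + 1), (Nat.choose M j + Nat.choose M (j + 1)) * X (j + 1) =
      Nat.choose M j * X (j + 1) + Nat.choose M (j + 1) * X (j + 1))]
  rw [Finset.sum_add_distrib]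
  have h : ∑ j ∈ range (M + 1), Nat.choose M (j + 1) * X (j + 1) =
      ∑ j ∈ range M, Nat.choose M (j + 1) * X (j + 1) := by
    rw [Finset.sum_range_succ, Nat.choose_succ_self, Nat.zero_mul, Nat.add_zero]
  rw [h]; ring

lemma jpascal_sum (M : ℕ) (X : ℕ → ℕ) :
    ∑ j ∈ range (M + 2), j * (Nat.choose (M + 1) j * X j) =
      (M + 1) * ∑ j ∈ range (M + 1), Nat.choose M j * X (j + 1) := by
  rw [Finset.sum_range_succ' (fun j => j * (Nat.choose (M + 1) j * X j))]
  simp only [Nat.zero_mul, Nat.add_zero]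
  rw [Finset.mul_sum]
  refine Finset.sum_congr rfl fun j _ => ?_
  have h : (M + 1) * Nat.choose M j = Nat.choose (M + 1) (j + 1) * (j + 1) :=
    Nat.add_one_mul_choose_eq M j
  calc (j + 1) * (Nat.choose (M + 1) (j + 1) * X (j + 1))
      = (Nat.choose (M + 1) (j + 1) * (j + 1)) * X (j + 1) := by ring
    _ = ((M + 1) * Nat.choose M j) * X (j + 1) := by rw [← h]
    _ = (M + 1) * (Nat.choose M j * X (j + 1)) := by ring

/-- The three binomial transforms of `A`. -/
lemma binom_A (M : ℕ) :
    (∑ j ∈ range (M + 1), Nat.choose M j * A j) = Nat.factorial (M + 1) ∧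
    (∑ j ∈ range (M + 1), Nat.choose M j * A (j + 1)) = (M + 1) * Nat.factorial (M + 1) ∧
    (∑ j ∈ range (M + 1), Nat.choose M j * A (j + 2)) + (M + 1) * Nat.factorial (M + 1) =
      (M + 2) * Nat.factorial (M + 2) := by
  induction M with
  | zero => simp [A, Nat.factorial]
  | succ M ih =>
    obtain ⟨hs, ht, hu⟩ := ih
    have hfac2 : Nat.factorial (M + 2) = (M + 2) * Nat.factorial (M + 1) :=
      Nat.factorial_succ (M + 1)
    have hfac3 : Nat.factorial (M + 3) = (M + 3) * Nat.factorial (M + 2) :=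
      Nat.factorial_succ (M + 2)
    have hS : (∑ j ∈ range (M + 2), Nat.choose (M + 1) j * A j) = Nat.factorial (M + 2) := by
      rw [pascal_sum M A, hs, ht, hfac2]; ring
    have hT : (∑ j ∈ range (M + 2), Nat.choose (M + 1) j * A (j + 1)) =
        (M + 2) * Nat.factorial (M + 2) := by
      rw [pascal_sum M (fun j => A (j + 1)), ht]
      have hc : (∑ j ∈ range (M + 1), Nat.choose M j * A (j + 1 + 1)) =
          ∑ j ∈ range (M + 1), Nat.choose M j * A (j + 2) := rfl
      rw [hc]
      omega
    refine ⟨hS, hT, ?_⟩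
    have expand : (∑ j ∈ range (M + 2), Nat.choose (M + 1) j * A (j + 2)) =
        (M + 1) * (∑ j ∈ range (M + 1), Nat.choose M j * A (j + 2)) +
        2 * (∑ j ∈ range (M + 2), Nat.choose (M + 1) j * A (j + 1)) +
        ((M + 1) * (∑ j ∈ range (M + 1), Nat.choose M j * A (j + 1)) +
          (∑ j ∈ range (M + 2), Nat.choose (M + 1) j * A j)) := by
      have step : ∀ j ∈ range (M + 2), Nat.choose (M + 1) j * A (j + 2) =
          j * (Nat.choose (M + 1) j * A (j + 1)) + 2 * (Nat.choose (M + 1) j * A (j + 1)) +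
          (j * (Nat.choose (M + 1) j * A j) + Nat.choose (M + 1) j * A j) := by
        intro j _
        have hA : A (j + 2) = (j + 2) * A (j + 1) + (j + 1) * A j := rfl
        rw [hA]; ring
      have hc : (∑ j ∈ range (M + 1), Nat.choose M j * A (j + 1 + 1)) =
          ∑ j ∈ range (M + 1), Nat.choose M j * A (j + 2) := rfl
      have h2 : ∑ j ∈ range (M + 2), 2 * (Nat.choose (M + 1) j * A (j + 1)) =
          2 * ∑ j ∈ range (M + 2), Nat.choose (M + 1) j * A (j + 1) :=
        (Finset.mul_sum _ _ _).symm
      rw [Finset.sum_congr rfl step, Finset.sum_add_distrib, Finset.sum_add_distrib,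
        Finset.sum_add_distrib, jpascal_sum M (fun j => A (j + 1)), jpascal_sum M A, hc, h2]
    rw [expand, hS, hT, ht]
    zify at hu ⊢
    rw [hfac3, hfac2] at *
    push_cast at hu ⊢
    nlinarith [hu]

lemma binom_A' (M : ℕ) :
    (∑ j ∈ range (M + 1), Nat.choose M j * A j) = Nat.factorial (M + 1) :=
  (binom_A M).1

/-- The key finite-sum identity. -/
lemma key_sum (N m : ℕ) (hm : m ≤ N + 1) :
    ∑ k ∈ Finset.Icc 1 (N + 1), Ank (N + 1) k * Nat.descFactorial (N + 1 - k) m =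
      Nat.factorial N * (N + 1 - m) := by
  have hIcc : Finset.Icc 1 (N + 1) = Finset.Ico 1 (N + 2) := by
    exact (Finset.Ico_add_one_right_eq_Icc 1 (N + 1)).symm
  rw [hIcc, Finset.sum_Ico_eq_sum_range]
  have hrange : N + 2 - 1 = N + 1 := by omega
  rw [hrange]
  have hterm : ∀ j ∈ range (N + 1),
      Ank (N + 1) (1 + j) * Nat.descFactorial (N + 1 - (1 + j)) m =
      Nat.choose N j * A j * Nat.descFactorial (N - j) m := by
    intro j _
    have h1 : N + 1 - (1 + j) = N - j := by omega
    have h2 : (1 + j) - 1 = j := by omega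
    rw [Ank, h1, h2]
    simp
  rw [Finset.sum_congr rfl hterm]
  rcases Nat.lt_or_ge N m with hNm | hNm
  · -- m = N + 1 : everything vanishes
    have hsum : ∀ j ∈ range (N + 1), Nat.choose N j * A j * Nat.descFactorial (N - j) m = 0 := by
      intro j _
      have : N - j < m := by omega
      rw [Nat.descFactorial_eq_zero_iff_lt.2 this, Nat.mul_zero]
    rw [Finset.sum_eq_zero hsum]
    have h : N + 1 - m = 0 := by omega
    rw [h, Nat.mul_zero]
  · -- m ≤ N
    have hchoose : ∀ j, Nat.choose N j * Nat.descFactorial (N - j) m =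
        Nat.descFactorial N m * Nat.choose (N - m) j := by
      intro j
      rcases Nat.lt_or_ge N j with hj | hj
      · rw [Nat.choose_eq_zero_of_lt hj, Nat.choose_eq_zero_of_lt (by omega), Nat.zero_mul,
          Nat.mul_zero]
      rcases le_or_gt j (N - m) with hjm | hjm
      · -- main case
        rw [Nat.descFactorial_eq_factorial_mul_choose (N - j) m,
          Nat.descFactorial_eq_factorial_mul_choose N m]
        have tri : Nat.choose N (N - j) * Nat.choose (N - j) m =
            Nat.choose N m * Nat.choose (N - m) (N - j - m) :=
          Nat.choose_mul (n := N) (k := N - j) (s := m) (by omega)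
        rw [Nat.choose_symm hj] at tri
        have hsymm : Nat.choose (N - m) (N - j - m) = Nat.choose (N - m) j := by
          have h : N - j - m = (N - m) - j := by omega
          rw [h, Nat.choose_symm (by omega)]
        rw [hsymm] at tri
        calc Nat.choose N j * (Nat.factorial m * Nat.choose (N - j) m)
            = Nat.factorial m * (Nat.choose N j * Nat.choose (N - j) m) := by ring
          _ = Nat.factorial m * (Nat.choose N m * Nat.choose (N - m) j) := by rw [tri]
          _ = Nat.factorial m * Nat.choose N m * Nat.choose (N - m) j := by ring
      · -- degenerate: N - j < m and j > N - m
        rw [Nat.descFactorial_eq_zero_iff_lt.2 (by omega), Nat.mul_zero,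
          Nat.choose_eq_zero_of_lt (by omega), Nat.mul_zero]
    have hsum : ∑ j ∈ range (N + 1), Nat.choose N j * A j * Nat.descFactorial (N - j) m =
        Nat.descFactorial N m * ∑ j ∈ range (N + 1), Nat.choose (N - m) j * A j := by
      rw [Finset.mul_sum]
      refine Finset.sum_congr rfl fun j _ => ?_
      calc Nat.choose N j * A j * Nat.descFactorial (N - j) m
          = (Nat.choose N j * Nat.descFactorial (N - j) m) * A j := by ring
        _ = (Nat.descFactorial N m * Nat.choose (N - m) j) * A j := by rw [hchoose j]
        _ = Nat.descFactorial N m * (Nat.choose (N - m) j * A j) := by ring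
    rw [hsum]
    have htrunc : ∑ j ∈ range (N + 1), Nat.choose (N - m) j * A j =
        ∑ j ∈ range (N - m + 1), Nat.choose (N - m) j * A j := by
      refine (Finset.sum_subset (Finset.range_subset_range.2 (by omega)) ?_).symm
      intro j _ hj
      rw [Finset.mem_range, not_lt] at hj
      rw [Nat.choose_eq_zero_of_lt (by omega), Nat.zero_mul]
    rw [htrunc, binom_A' (N - m)]
    have hd : Nat.factorial (N - m) * Nat.descFactorial N m = Nat.factorial N :=
      Nat.factorial_mul_descFactorial hNm
    have h1 : N - m + 1 = N + 1 - m := by omega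
    calc Nat.descFactorial N m * Nat.factorial (N - m + 1)
        = Nat.descFactorial N m * ((N - m + 1) * Nat.factorial (N - m)) := by
          rw [Nat.factorial_succ]
      _ = (Nat.factorial (N - m) * Nat.descFactorial N m) * (N - m + 1) := by ring
      _ = Nat.factorial N * (N + 1 - m) := by rw [hd, h1]

lemma stirling2_eq_zero : ∀ ℓ m : ℕ, ℓ < m → stirling2 ℓ m = 0 := by
  intro ℓ
  induction ℓ with
  | zero => intro m hm; match m, hm with | (k+1), _ => rfl
  | succ ℓ ih =>
    intro m hm
    match m, hm with
    | (k+1), hm =>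
      show (k + 1) * stirling2 ℓ (k + 1) + stirling2 ℓ k = 0
      rw [ih (k + 1) (by omega), ih k (by omega), Nat.mul_zero]

lemma x_mul_descFactorial (x m : ℕ) :
    x * Nat.descFactorial x m = Nat.descFactorial x (m + 1) + m * Nat.descFactorial x m := by
  rw [Nat.descFactorial_succ]
  rcases le_or_gt m x with h | h
  · rw [← Nat.add_mul, Nat.sub_add_cancel h]
  · rw [Nat.descFactorial_eq_zero_iff_lt.2 h]
    simp

lemma shift_sum (ℓ : ℕ) (Y : ℕ → ℕ) (hY : Y (ℓ + 1) = 0) :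
    ∑ m ∈ range (ℓ + 1), m * Y m = ∑ m ∈ range (ℓ + 1), (m + 1) * Y (m + 1) := by
  have h : ∑ m ∈ range (ℓ + 2), m * Y m = ∑ m ∈ range (ℓ + 1), m * Y m := by
    rw [Finset.sum_range_succ, hY, Nat.mul_zero, Nat.add_zero]
  rw [← h, Finset.sum_range_succ' (fun m => m * Y m), Nat.zero_mul, Nat.add_zero]

lemma pow_eq_sum_stirling (ℓ x : ℕ) :
    x ^ ℓ = ∑ m ∈ range (ℓ + 1), stirling2 ℓ m * Nat.descFactorial x m := by
  induction ℓ with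
  | zero => simp [stirling2]
  | succ ℓ ih =>
    have step : ∀ m ∈ range (ℓ + 1), stirling2 ℓ m * Nat.descFactorial x m * x =
        stirling2 ℓ m * Nat.descFactorial x (m + 1) +
          m * (stirling2 ℓ m * Nat.descFactorial x m) := by
      intro m _
      rw [mul_assoc, mul_comm (Nat.descFactorial x m) x, x_mul_descFactorial]
      ring
    have hx : x ^ (ℓ + 1) =
        ∑ m ∈ range (ℓ + 1), stirling2 ℓ m * Nat.descFactorial x (m + 1) +
          ∑ m ∈ range (ℓ + 1), m * (stirling2 ℓ m * Nat.descFactorial x m) := by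
      rw [pow_succ, ih, Finset.sum_mul, Finset.sum_congr rfl step, Finset.sum_add_distrib]
    have hshift : ∑ m ∈ range (ℓ + 1), m * (stirling2 ℓ m * Nat.descFactorial x m) =
        ∑ m ∈ range (ℓ + 1), (m + 1) * (stirling2 ℓ (m + 1) * Nat.descFactorial x (m + 1)) := by
      refine shift_sum ℓ (fun m => stirling2 ℓ m * Nat.descFactorial x m) ?_
      show stirling2 ℓ (ℓ + 1) * Nat.descFactorial x (ℓ + 1) = 0
      rw [stirling2_eq_zero ℓ (ℓ + 1) (by omega), Nat.zero_mul]
    have hrec : ∀ m ∈ range (ℓ + 1),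
        stirling2 (ℓ + 1) (m + 1) * Nat.descFactorial x (m + 1) =
        stirling2 ℓ m * Nat.descFactorial x (m + 1) +
          (m + 1) * (stirling2 ℓ (m + 1) * Nat.descFactorial x (m + 1)) := by
      intro m _
      have h : stirling2 (ℓ + 1) (m + 1) = (m + 1) * stirling2 ℓ (m + 1) + stirling2 ℓ m := rfl
      rw [h]; ring
    have hRHS : ∑ m ∈ range (ℓ + 2), stirling2 (ℓ + 1) m * Nat.descFactorial x m =
        ∑ m ∈ range (ℓ + 1), stirling2 ℓ m * Nat.descFactorial x (m + 1) +
          ∑ m ∈ range (ℓ + 1), (m + 1) * (stirling2 ℓ (m + 1) * Nat.descFactorial x (m + 1)) := by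
      rw [Finset.sum_range_succ' (fun m => stirling2 (ℓ + 1) m * Nat.descFactorial x m)]
      have h0 : stirling2 (ℓ + 1) 0 * Nat.descFactorial x 0 = 0 := by
        have h00 : stirling2 (ℓ + 1) 0 = 0 := rfl
        rw [h00, Nat.zero_mul]
      rw [h0, Nat.add_zero, Finset.sum_congr rfl hrec, Finset.sum_add_distrib]
    rw [hx, hRHS, hshift]

lemma bell_succ (ℓ : ℕ) :
    bell (ℓ + 1) = bell ℓ + ∑ m ∈ range (ℓ + 1), m * stirling2 ℓ m := by
  have hshift : ∑ m ∈ range (ℓ + 1), m * stirling2 ℓ m =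
      ∑ m ∈ range (ℓ + 1), (m + 1) * stirling2 ℓ (m + 1) :=
    shift_sum ℓ (fun m => stirling2 ℓ m) (stirling2_eq_zero ℓ (ℓ + 1) (by omega))
  have hrec : ∀ m ∈ range (ℓ + 1), stirling2 (ℓ + 1) (m + 1) =
      (m + 1) * stirling2 ℓ (m + 1) + stirling2 ℓ m := fun m _ => rfl
  have hRHS : ∑ m ∈ range (ℓ + 2), stirling2 (ℓ + 1) m =
      ∑ m ∈ range (ℓ + 1), (m + 1) * stirling2 ℓ (m + 1) +
        ∑ m ∈ range (ℓ + 1), stirling2 ℓ m := by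
    rw [Finset.sum_range_succ' (fun m => stirling2 (ℓ + 1) m)]
    have h0 : stirling2 (ℓ + 1) 0 = 0 := rfl
    rw [h0, Nat.add_zero, Finset.sum_congr rfl hrec, Finset.sum_add_distrib]
  show ∑ m ∈ range (ℓ + 2), stirling2 (ℓ + 1) m = _
  rw [hRHS, ← hshift]
  unfold bell
  ring

theorem stmt5 (ℓ n : ℕ) (hn1 : 1 ≤ n) (hℓn : ℓ ≤ n) :
    ∑ k ∈ Finset.Icc 1 n, (Ank n k : ℝ) / (Nat.factorial n) * ((n - k : ℕ) : ℝ) ^ ℓ =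
      (bell ℓ : ℝ) - ((bell (ℓ + 1) : ℝ) - (bell ℓ : ℝ)) / n := by
  obtain ⟨N, rfl⟩ : ∃ N, n = N + 1 := ⟨n - 1, by omega⟩
  have hterm : ∀ k ∈ Finset.Icc 1 (N + 1),
      (Ank (N + 1) k : ℝ) / (Nat.factorial (N + 1) : ℝ) * ((N + 1 - k : ℕ) : ℝ) ^ ℓ =
      ∑ m ∈ range (ℓ + 1),
        ((Ank (N + 1) k * (Nat.descFactorial (N + 1 - k) m) : ℕ) : ℝ) * (stirling2 ℓ m : ℝ)
          / (Nat.factorial (N + 1) : ℝ) := by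
    intro k _
    have h : ((N + 1 - k : ℕ) : ℝ) ^ ℓ = (((N + 1 - k) ^ ℓ : ℕ) : ℝ) := by push_cast; ring
    rw [h, pow_eq_sum_stirling ℓ (N + 1 - k)]
    push_cast
    rw [Finset.mul_sum]
    refine Finset.sum_congr rfl fun m _ => ?_
    ring
  rw [Finset.sum_congr rfl hterm, Finset.sum_comm]
  have hinner : ∀ m ∈ range (ℓ + 1),
      (∑ k ∈ Finset.Icc 1 (N + 1),
        ((Ank (N + 1) k * (Nat.descFactorial (N + 1 - k) m) : ℕ) : ℝ) * (stirling2 ℓ m : ℝ)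
          / (Nat.factorial (N + 1) : ℝ)) =
      (stirling2 ℓ m : ℝ) - (stirling2 ℓ m : ℝ) * (m : ℝ) / ((N : ℝ) + 1) := by
    intro m hm
    rw [Finset.mem_range] at hm
    have hmn : m ≤ N + 1 := by omega
    have hsum : ∑ k ∈ Finset.Icc 1 (N + 1),
        ((Ank (N + 1) k * (Nat.descFactorial (N + 1 - k) m) : ℕ) : ℝ) =
        ((Nat.factorial N * (N + 1 - m) : ℕ) : ℝ) := by
      rw [← Nat.cast_sum, key_sum N m hmn]
    have e1 : ∀ k, ((Ank (N + 1) k * (Nat.descFactorial (N + 1 - k) m) : ℕ) : ℝ) *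
        (stirling2 ℓ m : ℝ) / (Nat.factorial (N + 1) : ℝ) =
        ((Ank (N + 1) k * (Nat.descFactorial (N + 1 - k) m) : ℕ) : ℝ) *
        ((stirling2 ℓ m : ℝ) / (Nat.factorial (N + 1) : ℝ)) := fun k => by ring
    rw [Finset.sum_congr rfl (fun k _ => e1 k), ← Finset.sum_mul, hsum]
    have hsub : ((N + 1 - m : ℕ) : ℝ) = (N : ℝ) + 1 - (m : ℝ) := by
      rw [Nat.cast_sub hmn]; push_cast; ring
    have hfac : (Nat.factorial (N + 1) : ℝ) = ((N : ℝ) + 1) * (Nat.factorial N : ℝ) := by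
      rw [Nat.factorial_succ]; push_cast; ring
    have hfacne : (Nat.factorial N : ℝ) ≠ 0 := by
      exact_mod_cast Nat.cast_ne_zero.2 (Nat.factorial_ne_zero N)
    have hNne : ((N : ℝ) + 1) ≠ 0 := by positivity
    rw [Nat.cast_mul, hsub, hfac]
    field_simp
  rw [Finset.sum_congr rfl hinner, Finset.sum_sub_distrib]
  have hbell : ((bell (ℓ + 1) : ℝ)) - (bell ℓ : ℝ) =
      ∑ m ∈ range (ℓ + 1), (m : ℝ) * (stirling2 ℓ m : ℝ) := by
    have h := bell_succ ℓ
    have h2 : ((bell (ℓ + 1) : ℕ) : ℝ) =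
        ((bell ℓ + ∑ m ∈ range (ℓ + 1), m * stirling2 ℓ m : ℕ) : ℝ) := by
      exact_mod_cast congrArg (fun x : ℕ => (x : ℝ)) h
    push_cast at h2
    linarith [h2]
  have hbellsum : (bell ℓ : ℝ) = ∑ m ∈ range (ℓ + 1), (stirling2 ℓ m : ℝ) := by
    unfold bell; push_cast; ring
  rw [hbell, hbellsum]
  congr 1
  rw [Finset.sum_div]
  refine Finset.sum_congr rfl fun m _ => ?_
  push_cast
  ring
end

section
/- As n → ∞, S_n(n-1) := Σ_{k=1}^{n-1} A(n,k)/n! converges to 1 − 1/e. -/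
open Finset Filter Topology

private def S (m : ℕ) : ℕ := ∑ j ∈ range (m + 1), Nat.choose m j * A j
private def T (m : ℕ) : ℕ := ∑ j ∈ range (m + 1), Nat.choose m j * A (j + 1)

lemma aux_S (m : ℕ) : (∑ j ∈ range (m + 1), Nat.choose m (j + 1) * A (j + 1)) + 1 = S m := by
  have h1 : S m = (∑ j ∈ range m, Nat.choose m (j + 1) * A (j + 1)) + Nat.choose m 0 * A 0 :=
    Finset.sum_range_succ' _ m
  have h2 : (∑ j ∈ range (m + 1), Nat.choose m (j + 1) * A (j + 1))
      = (∑ j ∈ range m, Nat.choose m (j + 1) * A (j + 1)) + Nat.choose m (m + 1) * A (m + 1) :=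
    Finset.sum_range_succ _ m
  rw [h2, h1]
  simp [A, Nat.choose_succ_self]

lemma S_succ (m : ℕ) : S (m + 1) = S m + T m := by
  have h1 : S (m + 1)
      = (∑ j ∈ range (m + 1), Nat.choose (m + 1) (j + 1) * A (j + 1))
        + Nat.choose (m + 1) 0 * A 0 := Finset.sum_range_succ' _ (m + 1)
  have h2 : ∀ j, Nat.choose (m + 1) (j + 1) * A (j + 1)
      = Nat.choose m j * A (j + 1) + Nat.choose m (j + 1) * A (j + 1) := by
    intro j; rw [Nat.choose_succ_succ, Nat.add_mul]
  rw [h1]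
  simp only [h2, Finset.sum_add_distrib]
  have := aux_S m
  simp only [A, Nat.choose_zero_right]
  unfold T
  omega

lemma T_succ (m : ℕ) : T (m + 1) = (m + 1) * T m + (m + 1) * S m + S (m + 1) := by
  have h1 : T (m + 1)
      = (∑ j ∈ range (m + 1), Nat.choose (m + 1) (j + 1) * A (j + 2))
        + Nat.choose (m + 1) 0 * A (0 + 1) := Finset.sum_range_succ' _ (m + 1)
  have key : ∀ j, Nat.choose (m + 1) (j + 1) * (j + 1) = (m + 1) * Nat.choose m j := by
    intro j; rw [← Nat.add_one_mul_choose_eq]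
  have h2 : ∀ j, Nat.choose (m + 1) (j + 1) * A (j + 2)
      = (m + 1) * (Nat.choose m j * A (j + 1)) + Nat.choose (m + 1) (j + 1) * A (j + 1)
        + (m + 1) * (Nat.choose m j * A j) := by
    intro j
    have : A (j + 2) = (j + 1) * A (j + 1) + A (j + 1) + (j + 1) * A j := by
      show (j + 2) * A (j + 1) + (j + 1) * A j = _
      ring
    rw [this, Nat.mul_add, Nat.mul_add, ← Nat.mul_assoc, ← Nat.mul_assoc, key,
      Nat.mul_assoc, Nat.mul_assoc]
  rw [h1]
  simp only [h2, Finset.sum_add_distrib, ← Finset.mul_sum]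
  have hS1 : S (m + 1)
      = (∑ j ∈ range (m + 1), Nat.choose (m + 1) (j + 1) * A (j + 1))
        + Nat.choose (m + 1) 0 * A 0 := Finset.sum_range_succ' _ (m + 1)
  show (m + 1) * T m + (∑ j ∈ range (m + 1), Nat.choose (m + 1) (j + 1) * A (j + 1))
      + (m + 1) * S m + Nat.choose (m + 1) 0 * A 1 = _
  simp only [A, Nat.choose_zero_right] at hS1 ⊢
  omega

lemma ST_fact (m : ℕ) : S m = (m + 1).factorial ∧ T m + (m + 1).factorial = (m + 2).factorial := by
  induction m with
  | zero => constructor <;> simp [S, T, A]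
  | succ m ih =>
    obtain ⟨hS, hT⟩ := ih
    have h1 : S (m + 1) = (m + 2).factorial := by
      rw [S_succ, hS]; omega
    refine ⟨h1, ?_⟩
    rw [T_succ, hS, h1]
    set F := (m + 1).factorial with hF
    have hT' : T m + F = (m + 2) * F := by
      rw [show (m + 2).factorial = (m + 2) * F from rfl] at hT; exact hT
    have hTm : T m = (m + 1) * F := by
      have h : (m + 2) * F = (m + 1) * F + F := by ring
      linarith
    have e3 : (m + 3).factorial = (m + 3) * ((m + 2) * F) := rfl
    have e2 : (m + 2).factorial = (m + 2) * F := rfl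
    rw [e3, e2, hTm]
    ring

lemma sum_Icc_Ank (n : ℕ) (hn : 1 ≤ n) :
    (∑ k ∈ Icc 1 (n - 1), Ank n k) + A (n - 1) = n.factorial := by
  obtain ⟨m, rfl⟩ : ∃ m, n = m + 1 := ⟨n - 1, by omega⟩
  simp only [Nat.add_sub_cancel]
  have hmap : (∑ k ∈ Icc 1 m, Ank (m + 1) k) = ∑ j ∈ range m, Nat.choose m j * A j := by
    rw [show Icc 1 m = Ico 1 (m + 1) by rw [Finset.Ico_add_one_right_eq_Icc], Finset.sum_Ico_eq_sum_range]
    apply Finset.sum_congr (by simp)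
    intro j _
    simp [Ank, Nat.add_sub_cancel, Nat.add_comm 1 j]
  rw [hmap]
  have : S m = (∑ j ∈ range m, Nat.choose m j * A j) + Nat.choose m m * A m :=
    Finset.sum_range_succ _ m
  have hS := (ST_fact m).1
  simp [Nat.choose_self] at this
  omega

lemma A_derangements (n : ℕ) : (n + 1) * A n = numDerangements (n + 2) := by
  induction n using Nat.twoStepInduction with
  | zero => simp [A, numDerangements_add_two]
  | one => simp [A, numDerangements_add_two]
  | more n ih1 ih2 =>
    have h := numDerangements_add_two (n + 2)
    show (n + 3) * A (n + 2) = numDerangements (n + 4)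
    have hA : A (n + 2) = (n + 2) * A (n + 1) + (n + 1) * A n := rfl
    rw [show n + 4 = n + 2 + 2 by rfl, h, hA, ← ih1, ← ih2]
    ring

lemma A_div_fact_tendsto :
    Tendsto (fun n : ℕ => (A (n - 1) : ℝ) / (Nat.factorial n)) atTop (𝓝 (Real.exp 1)⁻¹) := by
  have h1 : Tendsto (fun n : ℕ => (numDerangements (n + 1) : ℝ) / (Nat.factorial (n + 1)))
      atTop (𝓝 (Real.exp (-1))) :=
    numDerangements_tendsto_inv_e.comp (tendsto_add_atTop_nat 1)
  have h2 : Tendsto (fun n : ℕ => (1 : ℝ) + 1 / n) atTop (𝓝 (1 + 0)) :=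
    tendsto_const_nhds.add tendsto_one_div_atTop_nhds_zero_nat
  have h3 := h1.mul h2
  rw [add_zero, mul_one] at h3
  rw [show (Real.exp 1)⁻¹ = Real.exp (-1) by rw [Real.exp_neg]]
  apply h3.congr'
  filter_upwards [eventually_ge_atTop 1] with n hn
  obtain ⟨m, rfl⟩ : ∃ m, n = m + 1 := ⟨n - 1, by omega⟩
  simp only [Function.comp, Nat.add_sub_cancel]
  have hd : ((numDerangements (m + 2) : ℝ)) = ((m : ℝ) + 1) * A m := by
    exact_mod_cast (A_derangements m).symm
  have hf : ((m + 1 + 1).factorial : ℝ) = ((m : ℝ) + 2) * (m + 1).factorial := by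
    rw [Nat.factorial_succ]; push_cast; ring
  have hm1 : ((m : ℝ) + 1) ≠ 0 := by positivity
  have hfp : ((m + 1).factorial : ℝ) ≠ 0 := by positivity
  show (numDerangements (m + 1 + 1) : ℝ) / ((m + 1 + 1).factorial : ℝ) * (1 + 1 / ((m + 1 : ℕ) : ℝ))
      = (A m : ℝ) / ((m + 1).factorial : ℝ)
  rw [show ((m + 1 + 1 : ℕ)) = m + 2 from rfl] at *
  push_cast
  rw [hd, hf]
  field_simp
  ring

theorem stmt10 :
    Filter.Tendsto
      (fun n : ℕ => ∑ k ∈ Finset.Icc 1 (n - 1), (Ank n k : ℝ) / (Nat.factorial n))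
      Filter.atTop (nhds (1 - (Real.exp 1)⁻¹)) := by
  have hlim : Tendsto (fun n : ℕ => 1 - (A (n - 1) : ℝ) / (Nat.factorial n))
      atTop (𝓝 (1 - (Real.exp 1)⁻¹)) :=
    tendsto_const_nhds.sub A_div_fact_tendsto
  apply hlim.congr'
  filter_upwards [eventually_ge_atTop 1] with n hn
  have hsum := sum_Icc_Ank n hn
  have hfact : (0 : ℝ) < (Nat.factorial n : ℝ) := by exact_mod_cast n.factorial_pos
  have hcast : (∑ k ∈ Icc 1 (n - 1), (Ank n k : ℝ)) + (A (n - 1) : ℝ) = (Nat.factorial n : ℝ) := by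
    exact_mod_cast congrArg (Nat.cast : ℕ → ℝ) hsum
  rw [eq_comm]
  rw [← Finset.sum_div]
  rw [div_eq_iff hfact.ne']
  rw [sub_mul, div_mul_cancel₀ _ hfact.ne', one_mul]
  linarith [hcast]
end

section
/- For every n ≥ 1, Σ_{t=1}^{n} S_n(t)/t = 1/n + Σ_{m=1}^{n-1} (n-m)!/(m·n!), where S_n(t) := Σ_{k=1}^{t} A(n,k)/n!. -/
open Finset Filter

lemma A_succ (k : ℕ) : A (k + 1) = (k + 1) * A k + k * A (k - 1) := by
  cases k with
  | zero => simp [A]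
  | succ m => rfl

lemma sumST (N : ℕ) :
    (∑ k ∈ range (N + 1), N.choose k * A k) = (N + 1).factorial ∧
    (∑ k ∈ range (N + 1), N.choose k * A (k + 1)) = (N + 1) * (N + 1).factorial := by
  induction N with
  | zero => simp [A]
  | succ N ih =>
    obtain ⟨hS, hT⟩ := ih
    have habs : ∀ (g : ℕ → ℕ),
        (∑ k ∈ range (N + 2), k * ((N + 1).choose k) * g k)
          = (N + 1) * ∑ k ∈ range (N + 1), N.choose k * g (k + 1) := by
      intro g
      rw [Finset.sum_range_succ', Finset.mul_sum]
      simp only [Nat.zero_mul, Nat.add_zero, zero_mul]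
      refine Finset.sum_congr rfl fun k _ => ?_
      have h : N.succ * N.choose k = (N + 1).choose (k + 1) * (k + 1) :=
        Nat.add_one_mul_choose_eq N k
      zify at h ⊢
      linear_combination (-(g (k + 1) : ℤ)) * h
    have hX : (∑ k ∈ range (N + 1), N.choose (k + 1) * A (k + 1)) + 1
        = (N + 1).factorial := by
      have key := Finset.sum_range_succ' (fun k => N.choose k * A k) (N + 1)
      have e3 : (∑ k ∈ range (N + 2), N.choose k * A k)
          = ∑ k ∈ range (N + 1), N.choose k * A k := by
        rw [Finset.sum_range_succ, Nat.choose_succ_self, zero_mul, add_zero]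
      rw [e3, hS] at key
      simpa [A] using key.symm
    have hS' : (∑ k ∈ range (N + 2), (N + 1).choose k * A k) = (N + 2).factorial := by
      rw [Finset.sum_range_succ']
      have e1 : ∀ k : ℕ, (N + 1).choose (k + 1) * A (k + 1)
          = N.choose k * A (k + 1) + N.choose (k + 1) * A (k + 1) := by
        intro k; rw [Nat.choose_succ_succ']; ring
      simp only [e1, Finset.sum_add_distrib]
      have : (N + 1).choose 0 * A 0 = 1 := by simp [A]
      rw [this, add_assoc, hX, hT, Nat.factorial_succ (N + 1)]
      ring
    refine ⟨hS', ?_⟩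
    have e4 : ∀ k : ℕ, (N + 1).choose k * A (k + 1)
        = k * ((N + 1).choose k) * A k + ((N + 1).choose k) * A k
          + k * ((N + 1).choose k) * A (k - 1) := by
      intro k; rw [A_succ]; ring
    simp only [e4, Finset.sum_add_distrib]
    rw [habs A, habs (fun k => A (k - 1)), hS']
    simp only [Nat.add_sub_cancel]
    rw [hT, hS, Nat.factorial_succ (N + 1)]
    ring

lemma keyA : ∀ N j : ℕ, j ≤ N →
    ∑ m ∈ Finset.Ico j N, (Nat.choose m j : ℝ) / ((N - m : ℕ) : ℝ)
      = (Nat.choose N j : ℝ) * ∑ i ∈ Finset.Ico j N, (1 : ℝ) / ((i : ℝ) + 1) := by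
  intro N
  induction N with
  | zero => intro j hj; interval_cases j <;> simp
  | succ N ih =>
    intro j hj
    rcases Nat.lt_or_ge j (N + 1) with hjN | hjN
    · -- j ≤ N
      have hjN' : j ≤ N := by omega
      -- reindex m = m' + 1 unless j = 0
      rcases Nat.eq_zero_or_pos j with rfl | hj0
      · -- j = 0 case : ∑_{m ∈ Ico 0 (N+1)} 1/(N+1-m) = ∑ 1/(i+1)
        simp only [Nat.choose_zero_right, Nat.cast_one, one_mul]
        refine Finset.sum_nbij' (fun m => N - m) (fun i => N - i) ?_ ?_ ?_ ?_ ?_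
        · intro a ha; simp only [Finset.mem_Ico] at *; omega
        · intro a ha; simp only [Finset.mem_Ico] at *; omega
        · intro a ha; simp only [Finset.mem_Ico] at ha; omega
        · intro a ha; simp only [Finset.mem_Ico] at ha; omega
        · intro a ha
          simp only [Finset.mem_Ico] at ha
          have h1 : N + 1 - a = (N - a) + 1 := by omega
          rw [h1]
          push_cast
          ring
      · obtain ⟨j', rfl⟩ : ∃ j'', j = j'' + 1 := ⟨j - 1, by omega⟩
        have hj'N : j' ≤ N := by omega
        have step1 :
            ∑ m ∈ Finset.Ico (j' + 1) (N + 1), (Nat.choose m (j' + 1) : ℝ) / ((N + 1 - m : ℕ) : ℝ)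
              = ∑ m ∈ Finset.Ico j' N,
                  ((Nat.choose m j' : ℝ) + (Nat.choose m (j' + 1) : ℝ)) / ((N - m : ℕ) : ℝ) := by
          refine Finset.sum_nbij' (fun m => m - 1) (fun m => m + 1) ?_ ?_ ?_ ?_ ?_
          · intro a ha; simp only [Finset.mem_Ico] at *; omega
          · intro a ha; simp only [Finset.mem_Ico] at *; omega
          · intro a ha; simp only [Finset.mem_Ico] at ha; omega
          · intro a ha; simp only [Finset.mem_Ico] at ha; omega
          · intro a ha
            simp only [Finset.mem_Ico] at ha
            obtain ⟨a', rfl⟩ : ∃ a'', a = a'' + 1 := ⟨a - 1, by omega⟩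
            have : (a' + 1).choose (j' + 1) = a'.choose j' + a'.choose (j' + 1) :=
              Nat.choose_succ_succ' a' j'
            rw [this]
            have h2 : N + 1 - (a' + 1) = N - a' := by omega
            rw [h2]
            push_cast
            simp
        rw [step1]
        have split : ∑ m ∈ Finset.Ico j' N,
              ((Nat.choose m j' : ℝ) + (Nat.choose m (j' + 1) : ℝ)) / ((N - m : ℕ) : ℝ)
            = (∑ m ∈ Finset.Ico j' N, (Nat.choose m j' : ℝ) / ((N - m : ℕ) : ℝ))
              + ∑ m ∈ Finset.Ico j' N, (Nat.choose m (j' + 1) : ℝ) / ((N - m : ℕ) : ℝ) := by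
          rw [← Finset.sum_add_distrib]
          exact Finset.sum_congr rfl fun m _ => add_div _ _ _
        rw [split]
        have drop : ∑ m ∈ Finset.Ico j' N, (Nat.choose m (j' + 1) : ℝ) / ((N - m : ℕ) : ℝ)
            = ∑ m ∈ Finset.Ico (j' + 1) N, (Nat.choose m (j' + 1) : ℝ) / ((N - m : ℕ) : ℝ) := by
          rcases Nat.lt_or_ge j' N with h | h
          · rw [Finset.sum_eq_sum_Ico_succ_bot h]
            simp [Nat.choose_succ_self]
          · have : j' = N := by omega
            subst this; simp
        rw [drop, ih j' hj'N, ih (j' + 1) (by omega)]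
        -- algebra with harmonic sums
        have hG1 : ∑ i ∈ Finset.Ico j' N, (1 : ℝ) / ((i : ℝ) + 1)
            = 1 / ((j' : ℝ) + 1) + ∑ i ∈ Finset.Ico (j' + 1) N, (1 : ℝ) / ((i : ℝ) + 1) := by
          rcases Nat.lt_or_ge j' N with h | h
          · rw [Finset.sum_eq_sum_Ico_succ_bot h]
          · have : j' = N := by omega
            subst this; simp at hjN
        have hG2 : ∑ i ∈ Finset.Ico (j' + 1) (N + 1), (1 : ℝ) / ((i : ℝ) + 1)
            = (∑ i ∈ Finset.Ico (j' + 1) N, (1 : ℝ) / ((i : ℝ) + 1)) + 1 / ((N : ℝ) + 1) := by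
          rw [Finset.sum_Ico_succ_top (by omega)]
        rw [hG1, hG2]
        have pascal : ((N + 1).choose (j' + 1) : ℝ) = (N.choose j' : ℝ) + (N.choose (j' + 1) : ℝ) := by
          rw [Nat.choose_succ_succ' N j']; push_cast; ring
        rw [pascal]
        have hmul : ((N : ℝ) + 1) * (N.choose j' : ℝ) = ((j' : ℝ) + 1) * ((N + 1).choose (j' + 1) : ℝ) := by
          have := Nat.add_one_mul_choose_eq N j'
          have h' : (N + 1) * N.choose j' = (N + 1).choose (j' + 1) * (j' + 1) := this
          exact_mod_cast by rw [h']; push_cast; ring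
        rw [pascal] at hmul
        have hj'pos : (0:ℝ) < (j' : ℝ) + 1 := by positivity
        have hNpos : (0:ℝ) < (N : ℝ) + 1 := by positivity
        field_simp
        nlinarith [hmul, sq_nonneg ((N:ℝ)+1), sq_nonneg ((j':ℝ)+1)]
    · -- j = N + 1 : empty sums
      have : j = N + 1 := by omega
      subst this
      simp

lemma rowsum (m : ℕ) : ∑ k ∈ Icc 1 (m + 1), (Nat.choose m (k - 1) * A (k - 1)) = (m + 1).factorial := by
  rw [← (sumST m).1]
  refine Finset.sum_nbij' (fun k => k - 1) (fun k => k + 1) ?_ ?_ ?_ ?_ ?_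
  · intro a ha; simp only [Finset.mem_Icc, Finset.mem_range] at *; omega
  · intro a ha; simp only [Finset.mem_Icc, Finset.mem_range] at *; omega
  · intro a ha; simp only [Finset.mem_Icc] at ha; omega
  · intro a ha; simp only [Finset.mem_range] at ha; omega
  · intro a ha; rfl

theorem stmt13 (n : ℕ) (hn : 1 ≤ n) :
    ∑ t ∈ Finset.Icc 1 n,
        (∑ k ∈ Finset.Icc 1 t, (Ank n k : ℝ) / (Nat.factorial n)) / t =
      1 / n + ∑ m ∈ Finset.Icc 1 (n - 1), (Nat.factorial (n - m) : ℝ) / (m * Nat.factorial n) := by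
  have hF : ((n.factorial : ℝ)) ≠ 0 := Nat.cast_ne_zero.mpr n.factorial_ne_zero
  have hn0 : ((n : ℝ)) ≠ 0 := Nat.cast_ne_zero.mpr (by omega)
  have hn1 : n - 1 + 1 = n := by omega
  -- Step 1: swap t and k
  have step1 : (∑ t ∈ Finset.Icc 1 n,
        (∑ k ∈ Finset.Icc 1 t, (Ank n k : ℝ) / (Nat.factorial n)) / t)
      = ∑ k ∈ Finset.Icc 1 n, ((Ank n k : ℝ) / (Nat.factorial n)) * ∑ t ∈ Finset.Icc k n, (1:ℝ)/(t:ℝ) := by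
    have e1 : ∀ t ∈ Finset.Icc 1 n, (∑ k ∈ Finset.Icc 1 t, (Ank n k : ℝ) / (Nat.factorial n)) / t
        = ∑ k ∈ Finset.Icc 1 t, ((Ank n k : ℝ) / (Nat.factorial n)) * (1/(t:ℝ)) := by
      intro t ht
      rw [Finset.sum_div]
      exact Finset.sum_congr rfl fun k _ => by ring
    rw [Finset.sum_congr rfl e1]
    rw [Finset.sum_comm' (s := Finset.Icc 1 n) (t := fun t => Finset.Icc 1 t)
      (s' := fun k => Finset.Icc k n) (t' := Finset.Icc 1 n)
      (by intro x y; simp only [Finset.mem_Icc]; omega)]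
    exact Finset.sum_congr rfl fun k _ => by rw [Finset.mul_sum]
  rw [step1]
  -- Step 2: split off t = n
  have step2 : ∀ k ∈ Finset.Icc 1 n, ∑ t ∈ Finset.Icc k n, (1:ℝ)/(t:ℝ)
      = 1/(n:ℝ) + ∑ t ∈ Finset.Icc k (n-1), (1:ℝ)/(t:ℝ) := by
    intro k hk
    simp only [Finset.mem_Icc] at hk
    have e : Finset.Icc k n = Finset.Icc k ((n-1)+1) := by rw [hn1]
    rw [e, Finset.sum_Icc_succ_top (by omega), hn1]
    ring
  rw [Finset.sum_congr rfl fun k hk => by rw [step2 k hk]]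
  simp only [mul_add, Finset.sum_add_distrib]
  -- Step 3: first part equals 1/n
  have step3 : ∑ k ∈ Finset.Icc 1 n, ((Ank n k : ℝ) / (Nat.factorial n)) * (1/(n:ℝ)) = 1/(n:ℝ) := by
    have hr : (∑ k ∈ Finset.Icc 1 n, (Ank n k : ℝ)) = (n.factorial : ℝ) := by
      have := rowsum (n - 1)
      rw [hn1] at this
      rw [← this]
      push_cast
      refine Finset.sum_congr rfl fun k _ => ?_
      simp [Ank]
    have e : ∀ k ∈ Finset.Icc 1 n, ((Ank n k : ℝ) / (Nat.factorial n)) * (1/(n:ℝ))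
        = (Ank n k : ℝ) * (1/((Nat.factorial n : ℝ) * n)) := by
      intro k _; field_simp
    rw [Finset.sum_congr rfl e, ← Finset.sum_mul, hr]
    field_simp
  rw [step3]
  congr 1
  -- Step 4: drop k = n in second part
  have step4 : ∑ k ∈ Finset.Icc 1 n, ((Ank n k : ℝ) / (Nat.factorial n)) * (∑ t ∈ Finset.Icc k (n-1), (1:ℝ)/(t:ℝ))
      = ∑ k ∈ Finset.Icc 1 (n-1), ((Ank n k : ℝ) / (Nat.factorial n)) * (∑ t ∈ Finset.Icc k (n-1), (1:ℝ)/(t:ℝ)) := by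
    have e : Finset.Icc 1 n = Finset.Icc 1 ((n-1)+1) := by rw [hn1]
    rw [e, Finset.sum_Icc_succ_top (by omega), hn1]
    have : Finset.Icc n (n - 1) = ∅ := by
      apply Finset.Icc_eq_empty; omega
    rw [this]
    simp
  rw [step4]
  -- Step 5: apply keyA termwise
  have step5 : ∀ k ∈ Finset.Icc 1 (n-1),
      ((Ank n k : ℝ) / (Nat.factorial n)) * (∑ t ∈ Finset.Icc k (n-1), (1:ℝ)/(t:ℝ))
      = ∑ m ∈ Finset.Ico (k-1) (n-1),
          ((A (k-1) : ℝ) * (Nat.choose m (k-1) : ℝ)) / (((n-1-m : ℕ):ℝ) * (Nat.factorial n : ℝ)) := by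
    intro k hk
    simp only [Finset.mem_Icc] at hk
    have reidx : (∑ t ∈ Finset.Icc k (n-1), (1:ℝ)/(t:ℝ))
        = ∑ i ∈ Finset.Ico (k-1) (n-1), (1:ℝ)/((i:ℝ)+1) := by
      refine Finset.sum_nbij' (fun t => t - 1) (fun i => i + 1) ?_ ?_ ?_ ?_ ?_
      · intro a ha; simp only [Finset.mem_Icc, Finset.mem_Ico] at *; omega
      · intro a ha; simp only [Finset.mem_Icc, Finset.mem_Ico] at *; omega
      · intro a ha; simp only [Finset.mem_Icc] at ha; omega
      · intro a ha; simp only [Finset.mem_Ico] at ha; omega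
      · intro a ha
        simp only [Finset.mem_Icc] at ha
        have : ((a - 1 : ℕ) : ℝ) + 1 = (a : ℝ) := by
          have : (a - 1) + 1 = a := by omega
          exact_mod_cast congrArg (Nat.cast : ℕ → ℝ) this
        rw [this]
    rw [reidx]
    have hA : (Ank n k : ℝ) = ((Nat.choose (n-1) (k-1) : ℝ)) * (A (k-1) : ℝ) := by
      push_cast [Ank]; ring
    rw [hA]
    have key := keyA (n-1) (k-1) (by omega)
    calc (Nat.choose (n-1) (k-1) : ℝ) * (A (k-1) : ℝ) / (Nat.factorial n : ℝ)
          * ∑ i ∈ Finset.Ico (k-1) (n-1), (1:ℝ)/((i:ℝ)+1)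
        = ((A (k-1) : ℝ) / (Nat.factorial n : ℝ))
          * ((Nat.choose (n-1) (k-1) : ℝ) * ∑ i ∈ Finset.Ico (k-1) (n-1), (1:ℝ)/((i:ℝ)+1)) := by ring
      _ = ((A (k-1) : ℝ) / (Nat.factorial n : ℝ))
          * ∑ m ∈ Finset.Ico (k-1) (n-1), (Nat.choose m (k-1) : ℝ) / (((n-1-m : ℕ)):ℝ) := by rw [← key]
      _ = _ := by
          rw [Finset.mul_sum]
          exact Finset.sum_congr rfl fun m _ => by ring
  rw [Finset.sum_congr rfl step5]
  -- Step 6: swap k and m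
  rw [Finset.sum_comm' (s := Finset.Icc 1 (n-1)) (t := fun k => Finset.Ico (k-1) (n-1))
      (s' := fun m => Finset.Icc 1 (m+1)) (t' := Finset.Ico 0 (n-1))
      (by intro x y; simp only [Finset.mem_Icc, Finset.mem_Ico]; omega)]
  -- Step 7: inner sum = (m+1)!
  have step7 : ∀ m ∈ Finset.Ico 0 (n-1),
      (∑ k ∈ Finset.Icc 1 (m+1),
        ((A (k-1) : ℝ) * (Nat.choose m (k-1) : ℝ)) / (((n-1-m : ℕ):ℝ) * (Nat.factorial n : ℝ)))
      = (((m+1).factorial : ℝ)) / (((n-1-m : ℕ):ℝ) * (Nat.factorial n : ℝ)) := by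
    intro m hm
    rw [← Finset.sum_div]
    congr 1
    have := rowsum m
    calc (∑ k ∈ Finset.Icc 1 (m+1), (A (k-1) : ℝ) * (Nat.choose m (k-1) : ℝ))
        = ((∑ k ∈ Finset.Icc 1 (m+1), Nat.choose m (k-1) * A (k-1) : ℕ) : ℝ) := by
          push_cast; exact Finset.sum_congr rfl fun k _ => by ring
      _ = (((m+1).factorial : ℝ)) := by rw [this]
  rw [Finset.sum_congr rfl step7]
  -- Step 8: reindex m -> m+1 and then m -> n-m
  refine Finset.sum_nbij' (fun m => n - (m+1)) (fun m => n - m - 1) ?_ ?_ ?_ ?_ ?_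
  · intro a ha; simp only [Finset.mem_Icc, Finset.mem_Ico] at *; omega
  · intro a ha; simp only [Finset.mem_Icc, Finset.mem_Ico] at *; omega
  · intro a ha; simp only [Finset.mem_Ico] at ha; omega
  · intro a ha; simp only [Finset.mem_Icc] at ha; omega
  · intro a ha
    simp only [Finset.mem_Ico] at ha
    have e1 : n - (n - (a+1)) = a + 1 := by omega
    have e2 : n - 1 - a = n - (a + 1) := by omega
    rw [e1, e2]
end

section
/- For every n ≥ 1, Σ_{t=1}^{n} S_n(t)/t^2 = 1/n^2 + Σ_{m=1}^{n-1} (n-m-1)!/(n·n!) + Σ_{m=1}^{n-1} ((n-m)!/(m·n!))·(H_n − H_{n-m}), where H_j is the j-th harmonic number. -/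
open Finset Filter

/-- Harmonic numbers. -/
noncomputable def H (j : ℕ) : ℝ := ∑ i ∈ Finset.Icc 1 j, (1 : ℝ) / i


lemma H_succ (j : ℕ) : H (j + 1) = H j + 1 / (j + 1 : ℝ) := by
  unfold H
  rw [Finset.sum_Icc_succ_top (by omega : 1 ≤ j + 1)]
  push_cast
  ring

/-- Pascal splitting for alternating binomial sums. -/
lemma alt_pascal (m p : ℕ) (g : ℕ → ℝ) :
    ∑ r ∈ range (m + 2), (-1 : ℝ) ^ r * ((m + 1).choose r) * g (p + r)
      = ∑ r ∈ range (m + 1), (-1 : ℝ) ^ r * (m.choose r) * g (p + r)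
        - ∑ r ∈ range (m + 1), (-1 : ℝ) ^ r * (m.choose r) * g (p + 1 + r) := by
  rw [Finset.sum_range_succ' (fun r => (-1 : ℝ) ^ r * ((m + 1).choose r) * g (p + r))]
  rw [Finset.sum_range_succ' (fun r => (-1 : ℝ) ^ r * (m.choose r) * g (p + r))]
  have hsplit : ∀ r, ((m + 1).choose (r + 1) : ℝ) = (m.choose r : ℝ) + (m.choose (r + 1) : ℝ) := by
    intro r; rw [Nat.choose_succ_succ]; push_cast; ring
  have h1 : ∑ r ∈ range (m + 1), (-1 : ℝ) ^ (r + 1) * ((m + 1).choose (r + 1)) * g (p + (r + 1))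
      = (∑ r ∈ range (m + 1), (-1 : ℝ) ^ (r + 1) * (m.choose r) * g (p + 1 + r))
        + ∑ r ∈ range (m + 1), (-1 : ℝ) ^ (r + 1) * (m.choose (r + 1)) * g (p + (r + 1)) := by
    rw [← Finset.sum_add_distrib]
    refine Finset.sum_congr rfl fun r _ => ?_
    rw [hsplit]
    have : p + (r + 1) = p + 1 + r := by omega
    rw [this]; ring
  rw [h1]
  have h2 : ∑ r ∈ range (m + 1), (-1 : ℝ) ^ (r + 1) * (m.choose (r + 1)) * g (p + (r + 1))
      = ∑ r ∈ range m, (-1 : ℝ) ^ (r + 1) * (m.choose (r + 1)) * g (p + (r + 1)) := by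
    rw [Finset.sum_range_succ]
    simp [Nat.choose_succ_self]
  rw [h2]
  have h3 : ∑ r ∈ range (m + 1), (-1 : ℝ) ^ r * (m.choose r) * g (p + 1 + r)
      = - ∑ r ∈ range (m + 1), (-1 : ℝ) ^ (r + 1) * (m.choose r) * g (p + 1 + r) := by
    rw [← Finset.sum_neg_distrib]
    refine Finset.sum_congr rfl fun r _ => ?_
    ring
  rw [h3]
  simp only [Nat.choose_zero_right]
  ring

noncomputable def Jr (m s : ℕ) : ℝ :=
  ∑ u ∈ range (m + 1), (-1 : ℝ) ^ u * (m.choose u) * ((s - u).factorial)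

lemma Jr_pascal (m s : ℕ) : Jr (m + 1) s = Jr m s - Jr m (s - 1) := by
  unfold Jr
  have := alt_pascal m 0 (fun x => ((s - x).factorial : ℝ))
  simp only [Nat.zero_add] at this
  rw [this]
  congr 1
  refine Finset.sum_congr rfl fun r _ => ?_
  have : s - (1 + r) = s - 1 - r := by omega
  rw [this]

lemma Jr_step (m s : ℕ) (h : m + 1 ≤ s) :
    Jr (m + 1) (s + 1) = (s + 1 : ℝ) * Jr (m + 1) s + (m + 1 : ℝ) * Jr m (s - 1) := by
  unfold Jr
  have key : ∀ u ∈ range (m + 2),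
      (-1 : ℝ) ^ u * ((m + 1).choose u) * ((s + 1 - u).factorial)
        = (s + 1 : ℝ) * ((-1 : ℝ) ^ u * ((m + 1).choose u) * ((s - u).factorial))
          - (u : ℝ) * ((-1 : ℝ) ^ u * ((m + 1).choose u) * ((s - u).factorial)) := by
    intro u hu
    rw [Finset.mem_range] at hu
    have hus : u ≤ s := by omega
    have h1 : s + 1 - u = (s - u) + 1 := by omega
    rw [h1, Nat.factorial_succ]
    have h2 : ((s - u : ℕ) : ℝ) = (s : ℝ) - u := by
      rw [Nat.cast_sub hus]
    push_cast
    rw [h2]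
    ring
  rw [Finset.sum_congr rfl key, Finset.sum_sub_distrib, ← Finset.mul_sum]
  congr 1
  -- remaining: -∑ u * ... = (m+1) * Jr m (s-1)
  rw [Finset.sum_range_succ' (fun u => (u : ℝ) * ((-1 : ℝ) ^ u * ((m + 1).choose u) * ((s - u).factorial)))]
  simp only [Nat.cast_zero, zero_mul, add_zero]
  have hsum : ∑ u ∈ range (m + 1),
      ((u + 1 : ℕ) : ℝ) * ((-1 : ℝ) ^ (u + 1) * ((m + 1).choose (u + 1)) * ((s - (u + 1)).factorial))
      = -((m + 1 : ℝ) * ∑ u ∈ range (m + 1), (-1 : ℝ) ^ u * (m.choose u) * ((s - 1 - u).factorial)) := by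
    rw [Finset.mul_sum, ← Finset.sum_neg_distrib]
    refine Finset.sum_congr rfl fun u hu => ?_
    have hc : ((m + 1) * m.choose u : ℕ) = ((m + 1).choose (u + 1) * (u + 1) : ℕ) :=
      Nat.add_one_mul_choose_eq m u
    have hc' : ((m + 1 : ℝ)) * (m.choose u : ℝ) = ((m + 1).choose (u + 1) : ℝ) * ((u + 1 : ℕ) : ℝ) := by
      exact_mod_cast congrArg (Nat.cast (R := ℝ)) hc
    have hs' : s - (u + 1) = s - 1 - u := by omega
    rw [hs', pow_succ]
    push_cast at hc' ⊢
    linear_combination ((-1:ℝ)^u * ((s - 1 - u).factorial : ℝ)) * hc'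
  rw [hsum]
  ring

lemma a_eq_Jr : ∀ m, (A m : ℝ) = Jr m (m + 1)
  | 0 => by simp [A, Jr]
  | 1 => by
      rw [show (1 : ℕ) + 1 = 2 from rfl]
      unfold Jr
      rw [show (1 : ℕ) + 1 = 2 from rfl]
      norm_num [A, Finset.sum_range_succ]
  | (m + 2) => by
      have ih1 := a_eq_Jr (m + 1)
      have ih0 := a_eq_Jr m
      have hp := Jr_pascal (m + 1) (m + 3)
      have hs := Jr_step m (m + 2) (by omega)
      have e1 : (m : ℕ) + 3 - 1 = m + 2 := by omega
      have e2 : (m : ℕ) + 2 - 1 = m + 1 := by omega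
      rw [e1] at hp
      rw [e2] at hs
      have hA : (A (m + 2) : ℝ) = (m + 2 : ℝ) * (A (m + 1) : ℝ) + (m + 1 : ℝ) * (A m : ℝ) := by
        show ((A (m+2) : ℕ) : ℝ) = _
        rw [show A (m + 2) = (m + 2) * A (m + 1) + (m + 1) * A m from rfl]
        push_cast
        ring
      rw [hA, ih1, ih0]
      have : Jr (m + 2) (m + 2 + 1) = Jr (m + 1) (m + 3) - Jr (m + 1) (m + 2) := by
        convert hp using 3 <;> omega
      rw [this]
      have : Jr (m + 1) (m + 3) = ((m + 2 : ℕ) + 1 : ℝ) * Jr (m + 1) (m + 2) + (m + 1 : ℝ) * Jr m (m + 1) := by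
        convert hs using 3 <;> push_cast <;> ring
      rw [this]
      push_cast
      ring

lemma L3 (t : ℕ) :
    (A t : ℝ) = ∑ v ∈ range (t + 1), (-1 : ℝ) ^ (t - v) * (t.choose v) * ((v + 1).factorial) := by
  rw [a_eq_Jr t]
  unfold Jr
  rw [← Finset.sum_range_reflect]
  refine Finset.sum_congr rfl fun v hv => ?_
  rw [Finset.mem_range] at hv
  have hvt : v ≤ t := by omega
  have e1 : t + 1 - 1 - v = t - v := by omega
  have e2 : t + 1 - (t - v) = v + 1 := by omega
  rw [e1, e2, Nat.choose_symm hvt]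




lemma L2 : ∀ m q : ℕ,
    ∑ r ∈ range (m + 1), (-1 : ℝ) ^ r * (m.choose r) / ((q + 1 + r : ℕ) : ℝ) ^ 2
      = (m.factorial : ℝ) * (q.factorial) / ((q + 1 + m).factorial) * (H (q + 1 + m) - H q)
  | 0, q => by
      simp only [Nat.zero_add, Finset.sum_range_one, Nat.choose_zero_right, Nat.add_zero, pow_zero]
      have h1 : (q + 1).factorial = (q + 1) * q.factorial := Nat.factorial_succ q
      have h2 : H (q + 1) = H q + 1 / (q + 1 : ℝ) := H_succ q
      rw [h1, h2]
      have hq : ((q : ℝ) + 1) ≠ 0 := by positivity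
      have hf : (q.factorial : ℝ) ≠ 0 := by exact_mod_cast (Nat.factorial_pos q).ne'
      push_cast
      field_simp
      ring
  | (m + 1), q => by
      have hap := alt_pascal m 0 (fun x => 1 / ((q + 1 + x : ℕ) : ℝ) ^ 2)
      simp only [Nat.zero_add] at hap
      have e0 : ∀ r, (-1 : ℝ) ^ r * ((m + 1).choose r) / ((q + 1 + r : ℕ) : ℝ) ^ 2
          = (-1 : ℝ) ^ r * ((m + 1).choose r) * (1 / ((q + 1 + r : ℕ) : ℝ) ^ 2) := by
        intro r; ring
      have e1 : ∀ (mm : ℕ), ∀ r, (-1 : ℝ) ^ r * ((mm).choose r) / ((q + 1 + r : ℕ) : ℝ) ^ 2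
          = (-1 : ℝ) ^ r * ((mm).choose r) * (1 / ((q + 1 + r : ℕ) : ℝ) ^ 2) := by
        intro mm r; ring
      simp only [e1]
      rw [hap]
      have ih1 := L2 m q
      have ih2 := L2 m (q + 1)
      simp only [e1] at ih1
      have ih2' : ∑ x ∈ range (m + 1), (-1 : ℝ) ^ x * (m.choose x) * (1 / ((q + 1 + (1 + x) : ℕ) : ℝ) ^ 2)
          = (m.factorial : ℝ) * ((q + 1).factorial) / ((q + 1 + 1 + m).factorial) * (H (q + 1 + 1 + m) - H (q + 1)) := by
        rw [← ih2]
        refine Finset.sum_congr rfl fun x _ => ?_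
        have e : q + 1 + (1 + x) = q + 1 + 1 + x := by omega
        rw [e]; ring
      rw [ih1, ih2']
      -- now pure algebra
      have ef1 : ((q + 1 + (m + 1)).factorial : ℝ) = ((q + 1 + m : ℕ) : ℝ) * ((q + 1 + m).factorial) + ((q + 1 + m).factorial) := by
        have : q + 1 + (m + 1) = (q + 1 + m) + 1 := by omega
        rw [this, Nat.factorial_succ]
        push_cast; ring
      have ef2 : ((q + 1 + 1 + m).factorial : ℝ) = ((q + 1 + m : ℕ) : ℝ) * ((q + 1 + m).factorial) + ((q + 1 + m).factorial) := by
        have : q + 1 + 1 + m = (q + 1 + m) + 1 := by omega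
        rw [this, Nat.factorial_succ]
        push_cast; ring
      have ef3 : ((q + 1).factorial : ℝ) = ((q : ℝ) + 1) * (q.factorial) := by
        rw [Nat.factorial_succ]; push_cast; ring
      have ef4 : ((m + 1).factorial : ℝ) = ((m : ℝ) + 1) * (m.factorial) := by
        rw [Nat.factorial_succ]; push_cast; ring
      have eh1 : H (q + 1 + 1 + m) = H (q + 1 + m) + 1 / (((q + 1 + m : ℕ) : ℝ) + 1) := by
        have e : q + 1 + 1 + m = (q + 1 + m) + 1 := by omega
        rw [e, H_succ]
      have eh2 : H (q + 1 + (m + 1)) = H (q + 1 + m) + 1 / (((q + 1 + m : ℕ) : ℝ) + 1) := by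
        have e : q + 1 + (m + 1) = (q + 1 + m) + 1 := by omega
        rw [e, H_succ]
      have eh3 : H (q + 1) = H q + 1 / ((q : ℝ) + 1) := H_succ q
      rw [ef1, ef2, ef3, ef4, eh1, eh2, eh3]
      have hqm : ((q + 1 + m : ℕ) : ℝ) = (q : ℝ) + 1 + m := by push_cast; ring
      rw [hqm]
      have hq : ((q : ℝ) + 1) ≠ 0 := by positivity
      have hqm1 : ((q : ℝ) + 1 + m) ≠ 0 := by positivity
      have hqm2 : ((q : ℝ) + 1 + m + 1) ≠ 0 := by positivity
      have hf : ((q + 1 + m).factorial : ℝ) ≠ 0 := by exact_mod_cast (Nat.factorial_pos _).ne'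
      have hfq : ((q.factorial : ℕ) : ℝ) ≠ 0 := by exact_mod_cast (Nat.factorial_pos _).ne'
      field_simp
      ring

lemma step1 (n : ℕ) : ∀ t, t ≤ n →
    ∑ k ∈ Icc 1 t, (((n - 1).choose (k - 1) * A (k - 1) : ℕ) : ℝ)
      = ∑ u ∈ Icc 1 t, ((n - 1).choose (u - 1) : ℝ) * (u.factorial : ℝ)
          * (-1 : ℝ) ^ (t - u) * ((n - u - 1).choose (t - u) : ℝ) := by
  intro t
  induction t with
  | zero => intro _; simp
  | succ t iht =>
    intro ht
    have htn : t ≤ n := by omega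
    have ht1 : t + 1 ≤ n := ht
    rw [Finset.sum_Icc_succ_top (by omega : 1 ≤ t + 1), Finset.sum_Icc_succ_top (by omega : 1 ≤ t + 1)]
    rw [iht htn]
    have etop : ((n - 1).choose (t + 1 - 1) : ℝ) * ((t + 1).factorial : ℝ)
          * (-1 : ℝ) ^ (t + 1 - (t + 1)) * ((n - (t + 1) - 1).choose (t + 1 - (t + 1)) : ℝ)
        = ((n - 1).choose t : ℝ) * ((t + 1).factorial : ℝ) := by
      have e1 : t + 1 - 1 = t := by omega
      have e2 : t + 1 - (t + 1) = 0 := by omega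
      rw [e1, e2]
      simp
    rw [etop]
    -- key pointwise manipulation
    have hkey : ∀ u ∈ Icc 1 t,
        ((n - 1).choose (u - 1) : ℝ) * (u.factorial : ℝ) * (-1 : ℝ) ^ (t + 1 - u) * ((n - u - 1).choose (t + 1 - u) : ℝ)
          - ((n - 1).choose (u - 1) : ℝ) * (u.factorial : ℝ) * (-1 : ℝ) ^ (t - u) * ((n - u - 1).choose (t - u) : ℝ)
        = ((n - 1).choose t : ℝ) * ((t.choose (u - 1)) : ℝ) * (u.factorial : ℝ) * (-1 : ℝ) ^ (t + 1 - u) := by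
      intro u hu
      rw [Finset.mem_Icc] at hu
      obtain ⟨hu1, hu2⟩ := hu
      have e1 : t + 1 - u = (t - u) + 1 := by omega
      have epascal : ((n - u - 1) + 1).choose ((t - u) + 1)
          = (n - u - 1).choose (t - u) + (n - u - 1).choose ((t - u) + 1) :=
        Nat.choose_succ_succ _ _
      have e2 : (n - u - 1) + 1 = n - u := by omega
      rw [e2] at epascal
      have etri : (n - 1).choose t * (t.choose (u - 1)) = (n - 1).choose (u - 1) * ((n - u).choose (t + 1 - u)) := by
        have h := Nat.choose_mul (n := n - 1) (k := t) (s := u - 1) (by omega)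
        have e3 : n - 1 - (u - 1) = n - u := by omega
        have e4 : t - (u - 1) = t + 1 - u := by omega
        rw [e3, e4] at h
        exact h
      have etri' : ((n - 1).choose t : ℝ) * ((t.choose (u - 1)) : ℝ)
          = ((n - 1).choose (u - 1) : ℝ) * (((n - u).choose (t + 1 - u)) : ℝ) := by
        exact_mod_cast congrArg (Nat.cast (R := ℝ)) etri
      have epas' : (((n - u).choose ((t - u) + 1) : ℕ) : ℝ)
          = ((n - u - 1).choose (t - u) : ℝ) + ((n - u - 1).choose ((t - u) + 1) : ℝ) := by
        rw [epascal]; push_cast; ring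
      rw [e1] at etri' ⊢
      rw [etri', epas']
      rw [pow_succ]
      ring
    -- sum the pointwise identity
    have hsum : ∑ u ∈ Icc 1 t, ((n - 1).choose (u - 1) : ℝ) * (u.factorial : ℝ)
            * (-1 : ℝ) ^ (t + 1 - u) * ((n - u - 1).choose (t + 1 - u) : ℝ)
        = ∑ u ∈ Icc 1 t, ((n - 1).choose (u - 1) : ℝ) * (u.factorial : ℝ)
            * (-1 : ℝ) ^ (t - u) * ((n - u - 1).choose (t - u) : ℝ)
          + ∑ u ∈ Icc 1 t, ((n - 1).choose t : ℝ) * ((t.choose (u - 1)) : ℝ) * (u.factorial : ℝ) * (-1 : ℝ) ^ (t + 1 - u) := by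
    -- from hkey
      rw [← Finset.sum_add_distrib]
      refine Finset.sum_congr rfl fun u hu => ?_
      have := hkey u hu
      linarith [this]
    rw [hsum]
    -- now reduce to L3
    have hL : (((n - 1).choose ((t + 1) - 1) * A ((t + 1) - 1) : ℕ) : ℝ)
        = ((n - 1).choose t : ℝ) * (A t : ℝ) := by
      have : (t + 1) - 1 = t := by omega
      rw [this]; push_cast; ring
    rw [hL]
    have hfin : ∑ u ∈ Icc 1 t, ((n - 1).choose t : ℝ) * ((t.choose (u - 1)) : ℝ) * (u.factorial : ℝ) * (-1 : ℝ) ^ (t + 1 - u)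
          + ((n - 1).choose t : ℝ) * ((t + 1).factorial : ℝ)
        = ((n - 1).choose t : ℝ) * (A t : ℝ) := by
      rw [L3]
      rw [Finset.mul_sum]
      rw [Finset.sum_range_succ]
      have hmap : ∑ u ∈ Icc 1 t, ((n - 1).choose t : ℝ) * ((t.choose (u - 1)) : ℝ) * (u.factorial : ℝ) * (-1 : ℝ) ^ (t + 1 - u)
          = ∑ v ∈ range t, ((n - 1).choose t : ℝ) * ((-1 : ℝ) ^ (t - v) * (t.choose v) * ((v + 1).factorial)) := by
        have : Icc 1 t = Ico 1 (t + 1) := by rw [Finset.Ico_add_one_right_eq_Icc]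
        rw [this, Finset.sum_Ico_eq_sum_range]
        have e : t + 1 - 1 = t := by omega
        rw [e]
        refine Finset.sum_congr rfl fun v hv => ?_
        rw [Finset.mem_range] at hv
        have e1 : 1 + v - 1 = v := by omega
        have e2 : t + 1 - (1 + v) = t - v := by omega
        rw [e1, e2]
        ring
      rw [hmap]
      simp only [Nat.choose_self, Nat.sub_self, pow_zero, Nat.cast_one]
      ring
    linarith [hfin]

theorem stmt14 (n : ℕ) (hn : 1 ≤ n) :
    ∑ t ∈ Finset.Icc 1 n,
        (∑ k ∈ Finset.Icc 1 t, (Ank n k : ℝ) / (Nat.factorial n)) / t ^ 2 =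
      1 / (n : ℝ) ^ 2
        + ∑ m ∈ Finset.Icc 1 (n - 1), (Nat.factorial (n - m - 1) : ℝ) / (n * Nat.factorial n)
        + ∑ m ∈ Finset.Icc 1 (n - 1),
            (Nat.factorial (n - m) : ℝ) / (m * Nat.factorial n) * (H n - H (n - m)) := by
  have hfn : ((n.factorial : ℕ) : ℝ) ≠ 0 := by exact_mod_cast (Nat.factorial_pos n).ne'
  have hnR : (n : ℝ) ≠ 0 := by exact_mod_cast (by omega : n ≠ 0)
  -- Step A: rewrite the LHS using step1 and pull out 1/n!
  have hA : ∑ t ∈ Finset.Icc 1 n,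
        (∑ k ∈ Finset.Icc 1 t, (Ank n k : ℝ) / (Nat.factorial n)) / (t : ℝ) ^ 2
      = (1 / (n.factorial : ℝ)) *
        ∑ t ∈ Finset.Icc 1 n, ∑ u ∈ Icc 1 t,
          ((n - 1).choose (u - 1) : ℝ) * (u.factorial : ℝ)
            * (-1 : ℝ) ^ (t - u) * ((n - u - 1).choose (t - u) : ℝ) / (t : ℝ) ^ 2 := by
    rw [Finset.mul_sum]
    refine Finset.sum_congr rfl fun t ht => ?_
    rw [Finset.mem_Icc] at ht
    have h1 : ∑ k ∈ Finset.Icc 1 t, (Ank n k : ℝ) / (Nat.factorial n)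
        = (∑ k ∈ Finset.Icc 1 t, (((n - 1).choose (k - 1) * A (k - 1) : ℕ) : ℝ)) / (Nat.factorial n) := by
      rw [Finset.sum_div]
      refine Finset.sum_congr rfl fun k _ => ?_
      rfl
    rw [h1, step1 n t ht.2, Finset.sum_div, Finset.sum_div, Finset.mul_sum]
    refine Finset.sum_congr rfl fun u _ => ?_
    ring
  rw [hA]
  -- Step B: swap order of summation
  have hB : ∑ t ∈ Finset.Icc 1 n, ∑ u ∈ Icc 1 t,
        ((n - 1).choose (u - 1) : ℝ) * (u.factorial : ℝ)
          * (-1 : ℝ) ^ (t - u) * ((n - u - 1).choose (t - u) : ℝ) / (t : ℝ) ^ 2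
      = ∑ u ∈ Finset.Icc 1 n, ∑ t ∈ Icc u n,
        ((n - 1).choose (u - 1) : ℝ) * (u.factorial : ℝ)
          * (-1 : ℝ) ^ (t - u) * ((n - u - 1).choose (t - u) : ℝ) / (t : ℝ) ^ 2 :=
    Finset.sum_comm' (fun t u => by simp only [Finset.mem_Icc]; omega)
  rw [hB]
  -- Step C: split the u = n term
  have hsplitC : Finset.Icc 1 n = Finset.Icc 1 ((n - 1) + 1) := by
    congr 1; omega
  rw [hsplitC, Finset.sum_Icc_succ_top (by omega : 1 ≤ (n - 1) + 1)]
  have hback : (n - 1) + 1 = n := by omega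
  rw [hback]
  -- the top term equals n!/n^2
  have htop : ∑ t ∈ Icc n n,
        ((n - 1).choose (n - 1) : ℝ) * (n.factorial : ℝ)
          * (-1 : ℝ) ^ (t - n) * ((n - n - 1).choose (t - n) : ℝ) / (t : ℝ) ^ 2
      = (n.factorial : ℝ) / (n : ℝ) ^ 2 := by
    rw [Finset.Icc_self, Finset.sum_singleton]
    simp [Nat.choose_self]
  rw [htop]
  -- Step D: evaluate inner sums via L2
  have hD : ∀ u ∈ Icc 1 (n - 1), (∑ t ∈ Icc u n,
        ((n - 1).choose (u - 1) : ℝ) * (u.factorial : ℝ)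
          * (-1 : ℝ) ^ (t - u) * ((n - u - 1).choose (t - u) : ℝ) / (t : ℝ) ^ 2)
      = ((n - 1).choose (u - 1) : ℝ) * (u.factorial : ℝ)
          * (((n - u - 1).factorial : ℝ) * ((u - 1).factorial : ℝ) / ((n - 1).factorial : ℝ))
          * (H (n - 1) - H (u - 1)) := by
    intro u hu
    rw [Finset.mem_Icc] at hu
    obtain ⟨hu1, hu2⟩ := hu
    have h1 : Icc u n = Ico u (n + 1) := (Finset.Ico_add_one_right_eq_Icc u n).symm
    rw [h1, Finset.sum_Ico_eq_sum_range]
    have h2 : n + 1 - u = ((n - u - 1) + 1) + 1 := by omega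
    rw [h2, Finset.sum_range_succ]
    have htopzero : ((n - 1).choose (u - 1) : ℝ) * (u.factorial : ℝ)
          * (-1 : ℝ) ^ ((u + ((n - u - 1) + 1)) - u) * ((n - u - 1).choose ((u + ((n - u - 1) + 1)) - u) : ℝ)
          / ((u + ((n - u - 1) + 1) : ℕ) : ℝ) ^ 2 = 0 := by
      have e1 : (u + ((n - u - 1) + 1)) - u = (n - u - 1) + 1 := by omega
      rw [e1, Nat.choose_succ_self]
      simp
    rw [htopzero, add_zero]
    have hmain : ∑ r ∈ range ((n - u - 1) + 1),
          ((n - 1).choose (u - 1) : ℝ) * (u.factorial : ℝ)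
            * (-1 : ℝ) ^ ((u + r) - u) * ((n - u - 1).choose ((u + r) - u) : ℝ) / ((u + r : ℕ) : ℝ) ^ 2
        = (((n - 1).choose (u - 1) : ℝ) * (u.factorial : ℝ)) *
          ∑ r ∈ range ((n - u - 1) + 1),
            (-1 : ℝ) ^ r * (((n - u - 1).choose r) : ℝ) / (((u - 1) + 1 + r : ℕ) : ℝ) ^ 2 := by
      rw [Finset.mul_sum]
      refine Finset.sum_congr rfl fun r _ => ?_
      have e1 : (u + r) - u = r := by omega
      have e2 : (u - 1) + 1 + r = u + r := by omega
      rw [e1, e2]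
      ring
    rw [hmain, L2 (n - u - 1) (u - 1)]
    have e3 : (u - 1) + 1 + (n - u - 1) = n - 1 := by omega
    rw [e3]
    ring
  rw [Finset.sum_congr rfl hD]
  -- Step E: final algebra
  rw [mul_add]
  have htop2 : (1 / (n.factorial : ℝ)) * ((n.factorial : ℝ) / (n : ℝ) ^ 2) = 1 / (n : ℝ) ^ 2 := by
    field_simp
  rw [htop2]
  have hsum2 : (1 / (n.factorial : ℝ)) * ∑ u ∈ Icc 1 (n - 1),
        ((n - 1).choose (u - 1) : ℝ) * (u.factorial : ℝ)
          * (((n - u - 1).factorial : ℝ) * ((u - 1).factorial : ℝ) / ((n - 1).factorial : ℝ))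
          * (H (n - 1) - H (u - 1))
      = ∑ m ∈ Finset.Icc 1 (n - 1), ((Nat.factorial (n - m - 1) : ℝ) / (n * Nat.factorial n)
          + (Nat.factorial (n - m) : ℝ) / (m * Nat.factorial n) * (H n - H (n - m))) := by
    rw [Finset.mul_sum]
    refine Finset.sum_nbij' (fun u => n - u) (fun m => n - m)
      (fun u hu => ?_) (fun m hm => ?_) (fun u hu => ?_) (fun m hm => ?_) (fun u hu => ?_)
    · rw [Finset.mem_Icc] at hu ⊢; omega
    · rw [Finset.mem_Icc] at hm ⊢; omega
    · rw [Finset.mem_Icc] at hu; omega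
    · rw [Finset.mem_Icc] at hm; omega
    · rw [Finset.mem_Icc] at hu
      obtain ⟨hu1, hu2⟩ := hu
      have e1 : n - (n - u) - 1 = u - 1 := by omega
      have e2 : n - (n - u) = u := by omega
      rw [e1, e2]
      -- key numeric identity
      have hcmf : (n - 1).choose (u - 1) * (u - 1).factorial * (n - u).factorial = (n - 1).factorial := by
        have h := Nat.choose_mul_factorial_mul_factorial (by omega : u - 1 ≤ n - 1)
        have e3 : (n - 1) - (u - 1) = n - u := by omega
        rw [e3] at h
        exact h
      have hu1f : ((u - 1).factorial : ℝ) ≠ 0 := by exact_mod_cast (Nat.factorial_pos _).ne'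
      have hnuf : ((n - u).factorial : ℝ) ≠ 0 := by exact_mod_cast (Nat.factorial_pos _).ne'
      have hn1f : ((n - 1).factorial : ℝ) ≠ 0 := by exact_mod_cast (Nat.factorial_pos _).ne'
      have hcR : ((n - 1).choose (u - 1) : ℝ)
          = ((n - 1).factorial : ℝ) / (((u - 1).factorial : ℝ) * ((n - u).factorial : ℝ)) := by
        rw [eq_div_iff (by positivity)]
        have hc2 := congrArg (Nat.cast (R := ℝ)) hcmf
        push_cast at hc2
        linear_combination hc2
      have hufacN : u.factorial = u * (u - 1).factorial := by
        nth_rewrite 1 [show u = (u - 1) + 1 by omega]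
        rw [Nat.factorial_succ]
        congr 1 <;> omega
      have hufac : (u.factorial : ℝ) = (u : ℝ) * ((u - 1).factorial : ℝ) := by
        exact_mod_cast congrArg (Nat.cast (R := ℝ)) hufacN
      have hnufacN : (n - u).factorial = (n - u) * (n - u - 1).factorial := by
        nth_rewrite 1 [show n - u = (n - u - 1) + 1 by omega]
        rw [Nat.factorial_succ]
        congr 1 <;> omega
      have hnufac : ((n - u).factorial : ℝ) = ((n - u : ℕ) : ℝ) * ((n - u - 1).factorial : ℝ) := by
        exact_mod_cast congrArg (Nat.cast (R := ℝ)) hnufacN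
      have hnfacN : n.factorial = n * (n - 1).factorial := by
        nth_rewrite 1 [show n = (n - 1) + 1 by omega]
        rw [Nat.factorial_succ]
        congr 1 <;> omega
      have hnfac : (n.factorial : ℝ) = (n : ℝ) * ((n - 1).factorial : ℝ) := by
        exact_mod_cast congrArg (Nat.cast (R := ℝ)) hnfacN
      have hHn : H n = H (n - 1) + 1 / (n : ℝ) := by
        have e : n = (n - 1) + 1 := by omega
        nth_rewrite 1 [e]
        rw [H_succ]
        have e' : ((n - 1 : ℕ) : ℝ) + 1 = (n : ℝ) := by
          have : ((n - 1 : ℕ) : ℝ) = (n : ℝ) - 1 := by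
            rw [Nat.cast_sub hn]; norm_num
          rw [this]; ring
        rw [e']
      have hHu : H u = H (u - 1) + 1 / (u : ℝ) := by
        have e : u = (u - 1) + 1 := by omega
        nth_rewrite 1 [e]
        rw [H_succ]
        have e' : ((u - 1 : ℕ) : ℝ) + 1 = (u : ℝ) := by
          have : ((u - 1 : ℕ) : ℝ) = (u : ℝ) - 1 := by
            rw [Nat.cast_sub hu1]; norm_num
          rw [this]; ring
        rw [e']
      have huR : (u : ℝ) ≠ 0 := by exact_mod_cast (by omega : u ≠ 0)
      have hnu : ((n - u : ℕ) : ℝ) = (n : ℝ) - (u : ℝ) := by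
        rw [Nat.cast_sub (by omega : u ≤ n)]
      have hnuR : ((n : ℝ) - (u : ℝ)) ≠ 0 := by
        rw [← hnu]
        exact_mod_cast (by omega : n - u ≠ 0)
      rw [hnu] at hnufac
      rw [hcR, hufac, hnufac, hnfac, hHn, hHu, hnu]
      field_simp
      ring
  rw [hsum2, Finset.sum_add_distrib]
  ring
end

section
/- Let ℓ be a nonnegative integer and s a real number. Then there is a constant C (depending only on ℓ and s) such that for all n ≥ 1, Σ_{k=1}^{n} (A(n,k)/n!)·(n-k)^ℓ·k^s ≤ C·n^s. -/
open Finset Filter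

lemma A_le_factorial : ∀ m : ℕ, A m ≤ Nat.factorial (m + 1) := by
  intro m
  induction m using Nat.strong_induction_on with
  | _ m ih =>
    match m with
    | 0 => simp [A]
    | 1 => simp [A]
    | n + 2 =>
      have h1 := ih (n + 1) (by omega)
      have h2 := ih n (by omega)
      rw [A]
      have h3 : (n+2) * A (n+1) + (n+1) * A n
          ≤ (n+2) * Nat.factorial (n+2) + (n+1) * Nat.factorial (n+1) := by gcongr
      refine h3.trans ?_
      have e : Nat.factorial (n + 2 + 1) = (n+3) * ((n+2) * Nat.factorial (n+1)) := by
        rw [Nat.factorial_succ, Nat.factorial_succ]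
      rw [e, Nat.factorial_succ]
      nlinarith [Nat.factorial_pos (n+1)]

lemma Ank_mul_le (n k : ℕ) (h1 : 1 ≤ k) (h2 : k ≤ n) :
    Ank n k * Nat.factorial (n - k) ≤ Nat.factorial n := by
  have hkn : k - 1 ≤ n - 1 := by omega
  have hch := Nat.choose_mul_factorial_mul_factorial hkn
  have hnk : n - 1 - (k - 1) = n - k := by omega
  rw [hnk] at hch
  have hA : A (k - 1) ≤ Nat.factorial k := by
    have h := A_le_factorial (k - 1)
    rwa [show k - 1 + 1 = k by omega] at h
  calc Ank n k * Nat.factorial (n - k)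
      = Nat.choose (n-1) (k-1) * A (k-1) * Nat.factorial (n-k) := rfl
    _ ≤ Nat.choose (n-1) (k-1) * Nat.factorial k * Nat.factorial (n-k) := by gcongr
    _ = Nat.choose (n-1) (k-1) * (k * Nat.factorial (k-1)) * Nat.factorial (n-k) := by
        rw [show k = k - 1 + 1 by omega, Nat.factorial_succ]; simp
    _ = k * (Nat.choose (n-1) (k-1) * Nat.factorial (k-1) * Nat.factorial (n-k)) := by ring
    _ = k * Nat.factorial (n-1) := by rw [hch]
    _ ≤ n * Nat.factorial (n-1) := by gcongr
    _ = Nat.factorial n := by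
        conv_rhs => rw [show n = n - 1 + 1 by omega, Nat.factorial_succ]
        rw [show n - 1 + 1 = n by omega]

lemma rpow_key (s : ℝ) (m : ℕ) (hm : |s| ≤ m) (n k : ℕ) (h1 : 1 ≤ k) (h2 : k ≤ n) :
    (k : ℝ) ^ s ≤ ((n - k + 1 : ℕ) : ℝ) ^ m * (n : ℝ) ^ s := by
  set j := n - k with hj
  have hk0 : (0:ℝ) < k := by exact_mod_cast h1
  have hn0 : (0:ℝ) < n := by exact_mod_cast lt_of_lt_of_le Nat.zero_lt_one (h1.trans h2)
  have hb1 : (1:ℝ) ≤ ((j + 1 : ℕ) : ℝ) := by exact_mod_cast Nat.succ_le_succ (Nat.zero_le j)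
  have hns : (0:ℝ) < (n:ℝ) ^ s := Real.rpow_pos_of_pos hn0 s
  rcases le_or_gt 0 s with hs | hs
  · have ha : (k : ℝ) ^ s ≤ (n : ℝ) ^ s :=
      Real.rpow_le_rpow hk0.le (by exact_mod_cast h2) hs
    have hb : (1:ℝ) ≤ ((j + 1 : ℕ) : ℝ) ^ m := one_le_pow₀ hb1
    nlinarith
  · have hnk : (n : ℝ) ≤ (k : ℝ) * ((j + 1 : ℕ) : ℝ) := by
      have hn' : n ≤ k * (j + 1) := by
        have : n = k + j := by omega
        nlinarith [h1, Nat.zero_le j]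
      push_cast
      exact_mod_cast hn'
    have hneg : (0:ℝ) ≤ -s := by linarith
    have step1 : (n : ℝ) ^ (-s) ≤ ((k : ℝ) * ((j + 1 : ℕ) : ℝ)) ^ (-s) :=
      Real.rpow_le_rpow hn0.le hnk hneg
    rw [Real.mul_rpow hk0.le (by positivity)] at step1
    have hks : (0:ℝ) < (k:ℝ) ^ s := Real.rpow_pos_of_pos hk0 s
    have hkk : (k:ℝ) ^ s * (k:ℝ) ^ (-s) = 1 := by
      rw [← Real.rpow_add hk0]; simp
    have step2 : (k:ℝ) ^ s * (n : ℝ) ^ (-s) ≤ ((j + 1 : ℕ) : ℝ) ^ (-s) := by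
      calc (k:ℝ) ^ s * (n : ℝ) ^ (-s)
          ≤ (k:ℝ) ^ s * ((k:ℝ) ^ (-s) * ((j + 1 : ℕ) : ℝ) ^ (-s)) :=
            mul_le_mul_of_nonneg_left step1 hks.le
        _ = ((k:ℝ)^s * (k:ℝ)^(-s)) * ((j + 1 : ℕ) : ℝ) ^ (-s) := by ring
        _ = ((j + 1 : ℕ) : ℝ) ^ (-s) := by rw [hkk, one_mul]
    have step3 : ((j + 1 : ℕ) : ℝ) ^ (-s) ≤ ((j + 1 : ℕ) : ℝ) ^ m := by
      rw [← Real.rpow_natCast _ m]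
      exact Real.rpow_le_rpow_of_exponent_le hb1 ((neg_le_abs s).trans hm)
    have hnn : (n:ℝ) ^ (-s) * (n:ℝ) ^ s = 1 := by
      rw [← Real.rpow_add hn0]; simp
    calc (k:ℝ) ^ s = ((k:ℝ) ^ s * (n:ℝ) ^ (-s)) * (n:ℝ) ^ s := by
          rw [mul_assoc, hnn, mul_one]
      _ ≤ ((j + 1 : ℕ) : ℝ) ^ m * (n:ℝ) ^ s := by
          exact mul_le_mul_of_nonneg_right (step2.trans step3) hns.le

theorem stmt18 (ℓ : ℕ) (s : ℝ) :
    ∃ C : ℝ, ∀ n : ℕ, 1 ≤ n →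
      ∑ k ∈ Finset.Icc 1 n,
          (Ank n k : ℝ) / (Nat.factorial n) * ((n - k : ℕ) : ℝ) ^ ℓ * (k : ℝ) ^ s ≤
        C * (n : ℝ) ^ s := by
  set m : ℕ := ⌈|s|⌉₊ with hmdef
  have hm : |s| ≤ m := Nat.le_ceil _
  set B : ℝ := 2 ^ (ℓ + m) with hB
  have hB1 : (1:ℝ) ≤ B := one_le_pow₀ (by norm_num)
  -- summable majorant
  have hsumm : Summable (fun j : ℕ => B ^ j / Nat.factorial j) :=
    Real.summable_pow_div_factorial B
  refine ⟨∑' j : ℕ, B ^ j / Nat.factorial j, fun n hn => ?_⟩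
  have hn0 : (0:ℝ) < n := by exact_mod_cast hn
  have hns : (0:ℝ) < (n:ℝ) ^ s := Real.rpow_pos_of_pos hn0 s
  -- per-term bound
  have key : ∀ k ∈ Finset.Icc 1 n,
      (Ank n k : ℝ) / (Nat.factorial n) * ((n - k : ℕ) : ℝ) ^ ℓ * (k : ℝ) ^ s
        ≤ (B ^ (n - k) / Nat.factorial (n - k)) * (n:ℝ) ^ s := by
    intro k hk
    rw [Finset.mem_Icc] at hk
    obtain ⟨h1, h2⟩ := hk
    set j := n - k with hj
    have hfj : (0:ℝ) < Nat.factorial j := by exact_mod_cast Nat.factorial_pos j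
    have hfn : (0:ℝ) < Nat.factorial n := by exact_mod_cast Nat.factorial_pos n
    have hA : (Ank n k : ℝ) / (Nat.factorial n) ≤ 1 / Nat.factorial j := by
      rw [div_le_div_iff₀ hfn hfj]
      have := Ank_mul_le n k h1 h2
      calc (Ank n k : ℝ) * Nat.factorial j ≤ Nat.factorial n := by exact_mod_cast this
        _ = 1 * Nat.factorial n := (one_mul _).symm
    have hks : (0:ℝ) ≤ (k:ℝ) ^ s := (Real.rpow_pos_of_pos (by exact_mod_cast h1) s).le
    have hpow : ((j:ℝ)) ^ ℓ * ((j + 1 : ℕ) : ℝ) ^ m ≤ B ^ j := by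
      have hj2 : ((j + 1 : ℕ) : ℝ) ≤ 2 ^ j := by
        exact_mod_cast Nat.lt_two_pow_self (n := j)
      have hjle : ((j:ℝ)) ≤ ((j + 1 : ℕ) : ℝ) := by push_cast; linarith
      have h1' : ((j:ℝ)) ^ ℓ ≤ ((j + 1 : ℕ) : ℝ) ^ ℓ := pow_le_pow_left₀ (by positivity) hjle ℓ
      calc ((j:ℝ)) ^ ℓ * ((j + 1 : ℕ) : ℝ) ^ m
          ≤ ((j + 1 : ℕ) : ℝ) ^ ℓ * ((j + 1 : ℕ) : ℝ) ^ m :=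
            mul_le_mul_of_nonneg_right h1' (by positivity)
        _ = ((j + 1 : ℕ) : ℝ) ^ (ℓ + m) := by rw [← pow_add]
        _ ≤ ((2:ℝ) ^ j) ^ (ℓ + m) := pow_le_pow_left₀ (by positivity) hj2 (ℓ + m)
        _ = B ^ j := by rw [hB, ← pow_mul, ← pow_mul, Nat.mul_comm]
    have hkey := rpow_key s m hm n k h1 h2
    have hAnn : (0:ℝ) ≤ (Ank n k : ℝ) / (Nat.factorial n) := by positivity
    calc (Ank n k : ℝ) / (Nat.factorial n) * ((j:ℕ) : ℝ) ^ ℓ * (k : ℝ) ^ s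
        ≤ (1 / Nat.factorial j) * ((j:ℝ)) ^ ℓ * (((j + 1 : ℕ) : ℝ) ^ m * (n:ℝ) ^ s) := by
          refine mul_le_mul (mul_le_mul_of_nonneg_right hA (by positivity)) hkey hks ?_
          positivity
      _ = (((j:ℝ)) ^ ℓ * ((j + 1 : ℕ) : ℝ) ^ m / Nat.factorial j) * (n:ℝ) ^ s := by ring
      _ ≤ (B ^ j / Nat.factorial j) * (n:ℝ) ^ s := by
          refine mul_le_mul_of_nonneg_right ?_ hns.le
          exact div_le_div_of_nonneg_right hpow hfj.le
  have sum_le := Finset.sum_le_sum key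
  refine sum_le.trans ?_
  rw [← Finset.sum_mul]
  gcongr
  -- reindex and compare with tsum
  have reindex : ∑ k ∈ Finset.Icc 1 n, (B ^ (n - k) / Nat.factorial (n - k))
      = ∑ j ∈ Finset.range n, (B ^ j / Nat.factorial j) := by
    refine Finset.sum_nbij' (fun k => n - k) (fun j => n - j) ?_ ?_ ?_ ?_ ?_
    · intro a ha; rw [Finset.mem_Icc] at ha; rw [Finset.mem_range]; omega
    · intro a ha; rw [Finset.mem_range] at ha; rw [Finset.mem_Icc]; omega
    · intro a ha; rw [Finset.mem_Icc] at ha; omega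
    · intro a ha; rw [Finset.mem_range] at ha; omega
    · intro a _; rfl
  rw [reindex]
  exact Summable.sum_le_tsum _ (fun j _ => by positivity) hsumm
end

section
/- For every nonnegative integer ℓ, Σ_{t=1}^{n} S_n(t)·t^ℓ = 2·n^ℓ + O(n^{ℓ-1}) as n → ∞, where S_n(t) := Σ_{k=1}^{t} A(n,k)/n!; i.e., there is a constant C depending only on ℓ with |Σ_{t=1}^{n} S_n(t)·t^ℓ − 2·n^ℓ| ≤ C·n^{ℓ-1} for all n ≥ 1. -/
open Finset Filter

lemma BD (n : ℕ) : (∑ m ∈ range (n+1), (n.choose m) * A m = Nat.factorial (n+1)) ∧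
    (∑ m ∈ range (n+1), (n.choose m) * A (m+1) = Nat.factorial (n+1) * (n+1)) := by
  induction n with
  | zero => simp [A]
  | succ n ih =>
    obtain ⟨hB, hD⟩ := ih
    have shift : ∑ m ∈ range (n+2), (n.choose m) * A m = Nat.factorial (n+1) := by
      rw [sum_range_succ, Nat.choose_succ_self, zero_mul, add_zero, hB]
    have hS : (∑ i ∈ range (n+1), (n.choose (i+1)) * A (i+1)) + 1 = Nat.factorial (n+1) := by
      rw [← shift, Finset.sum_range_succ' (fun m => (n.choose m) * A m) (n+1)]
      simp [A]
    have hB' : ∑ m ∈ range (n+2), ((n+1).choose m) * A m = Nat.factorial (n+2) := by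
      rw [Finset.sum_range_succ' _ (n+1)]
      have : ∀ i ∈ range (n+1), ((n+1).choose (i+1)) * A (i+1)
          = (n.choose i) * A (i+1) + (n.choose (i+1)) * A (i+1) := by
        intro i _
        rw [Nat.choose_succ_succ, add_mul]
      rw [Finset.sum_congr rfl this, Finset.sum_add_distrib, hD]
      simp only [Nat.choose_zero_right, one_mul]
      show _ + _ + A 0 = _
      have hA0 : A 0 = 1 := rfl
      rw [hA0, add_assoc, hS, Nat.factorial_succ (n+1)]
      ring
    refine ⟨hB', ?_⟩
    have hS' : (∑ i ∈ range (n+1), ((n+1).choose (i+1)) * A (i+1)) + 1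
        = Nat.factorial (n+2) := by
      rw [← hB', Finset.sum_range_succ' (fun m => ((n+1).choose m) * A m) (n+1)]
      simp [A]
    rw [Finset.sum_range_succ' _ (n+1)]
    have key : ∀ i ∈ range (n+1), ((n+1).choose (i+1)) * A (i+2)
        = (n+1) * ((n.choose i) * A (i+1)) + ((n+1).choose (i+1)) * A (i+1)
          + (n+1) * ((n.choose i) * A i) := by
      intro i _
      have h1 : (i+1) * ((n+1).choose (i+1)) = (n+1) * (n.choose i) := by
        rw [mul_comm (i+1), ← Nat.add_one_mul_choose_eq]
      have hA : A (i+2) = (i+2) * A (i+1) + (i+1) * A i := rfl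
      calc ((n+1).choose (i+1)) * A (i+2)
          = (i+1) * ((n+1).choose (i+1)) * A (i+1) + ((n+1).choose (i+1)) * A (i+1)
            + (i+1) * ((n+1).choose (i+1)) * A i := by rw [hA]; ring
        _ = _ := by rw [h1]; ring
    rw [Finset.sum_congr rfl key, Finset.sum_add_distrib, Finset.sum_add_distrib,
      ← Finset.mul_sum, ← Finset.mul_sum, hD, hB]
    simp only [Nat.choose_zero_right, one_mul]
    show _ + (A (0+1)) = _
    have hA1 : A (0+1) = 1 := rfl
    rw [hA1]
    have expand : (n+1) * (Nat.factorial (n+1) * (n+1))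
        + (∑ i ∈ range (n+1), ((n+1).choose (i+1)) * A (i+1))
        + (n+1) * Nat.factorial (n+1) + 1
        = ((∑ i ∈ range (n+1), ((n+1).choose (i+1)) * A (i+1)) + 1)
          + (n+1) * (Nat.factorial (n+1) * (n+1)) + (n+1) * Nat.factorial (n+1) := by ring
    rw [expand, hS', Nat.factorial_succ (n+1)]
    ring

lemma sumA (n : ℕ) : ∑ m ∈ range (n+1), (n.choose m) * A m = Nat.factorial (n+1) := (BD n).1

lemma sumA' (r t : ℕ) (h : r + 1 ≤ t) :
    ∑ i ∈ range t, (r.choose i) * A i = Nat.factorial (r+1) := by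
  rw [← sumA r]
  apply (Finset.sum_subset (Finset.range_subset_range.2 h) _).symm
  intro i _ hi
  have : r < i := by simpa using hi
  simp [Nat.choose_eq_zero_of_lt this]

lemma chooseW (s i : ℕ) : (s - i) * Nat.choose s i = s * Nat.choose (s-1) i := by
  cases s with
  | zero => simp
  | succ r =>
    rw [mul_comm, ← Nat.choose_succ_right_eq, ← Nat.add_one_mul_choose_eq]
    rfl

lemma AnkS (s i : ℕ) : Ank (s+1) (1+i) = Nat.choose s i * A i := by
  simp [Ank, Nat.add_sub_cancel_left]

lemma I0 (n : ℕ) (hn : 1 ≤ n) : ∑ k ∈ Icc 1 n, Ank n k = Nat.factorial n := by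
  obtain ⟨s, rfl⟩ := Nat.exists_eq_add_of_le' hn
  rw [← Finset.Ico_add_one_right_eq_Icc, Finset.sum_Ico_eq_sum_range,
    show s + 1 + 1 - 1 = s + 1 by omega]
  rw [Finset.sum_congr rfl (fun i _ => AnkS s i)]
  exact sumA s

lemma I1 (n : ℕ) (hn : 1 ≤ n) :
    ∑ k ∈ Icc 1 n, (n - k) * Ank n k = (n-1) * Nat.factorial (n-1) := by
  obtain ⟨s, rfl⟩ := Nat.exists_eq_add_of_le' hn
  rw [← Finset.Ico_add_one_right_eq_Icc, Finset.sum_Ico_eq_sum_range,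
    show s + 1 + 1 - 1 = s + 1 by omega]
  have hterm : ∀ i, (s + 1 - (1 + i)) * Ank (s+1) (1+i) = s * (Nat.choose (s-1) i * A i) := by
    intro i
    rw [AnkS, show s + 1 - (1+i) = s - i by omega, ← mul_assoc, chooseW, mul_assoc]
  rw [Finset.sum_congr rfl (fun i _ => hterm i), ← Finset.mul_sum,
    show s + 1 - 1 = s by omega]
  cases s with
  | zero => simp
  | succ r =>
    rw [show r + 1 - 1 = r by omega, sumA' r (r+2) (by omega)]

lemma I2 (n : ℕ) (hn : 1 ≤ n) :
    ∑ k ∈ Icc 1 n, ((n - k) * (n - k - 1)) * Ank n k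
      = (n-1) * ((n-2) * Nat.factorial (n-2)) := by
  obtain ⟨s, rfl⟩ := Nat.exists_eq_add_of_le' hn
  rw [← Finset.Ico_add_one_right_eq_Icc, Finset.sum_Ico_eq_sum_range,
    show s + 1 + 1 - 1 = s + 1 by omega]
  have hterm : ∀ i, ((s + 1 - (1 + i)) * (s + 1 - (1 + i) - 1)) * Ank (s+1) (1+i)
      = s * ((s-1) * (Nat.choose (s-2) i * A i)) := by
    intro i
    rw [AnkS, show s + 1 - (1+i) = s - i by omega]
    calc (s - i) * (s - i - 1) * (Nat.choose s i * A i)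
        = (s - 1 - i) * ((s - i) * Nat.choose s i) * A i := by
          rw [show s - i - 1 = s - 1 - i by omega]; ring
      _ = (s - 1 - i) * (s * Nat.choose (s-1) i) * A i := by rw [chooseW]
      _ = s * (((s-1) - i) * Nat.choose (s-1) i) * A i := by ring
      _ = s * ((s-1) * Nat.choose (s-1-1) i) * A i := by rw [chooseW]
      _ = s * ((s-1) * (Nat.choose (s-2) i * A i)) := by
          rw [show s - 1 - 1 = s - 2 by omega]; ring
  rw [Finset.sum_congr rfl (fun i _ => hterm i), ← Finset.mul_sum]
  simp only [← Finset.mul_sum]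
  rw [show s + 1 - 1 = s by omega, show s + 1 - 2 = s - 1 by omega]
  rcases s with _ | _ | r
  · simp
  · simp
  · rw [show r + 1 + 1 - 1 = r + 1 by omega, show r + 1 + 1 - 2 = r by omega,
      sumA' r (r+3) (by omega)]

lemma key1 (n : ℕ) (hn : 1 ≤ n) :
    ∑ k ∈ Icc 1 n, (n - k + 1) * Ank n k
      = Nat.factorial n + (n-1) * Nat.factorial (n-1) := by
  have : ∀ k, (n - k + 1) * Ank n k = (n - k) * Ank n k + Ank n k := by
    intro k; ring
  rw [Finset.sum_congr rfl (fun k _ => this k), Finset.sum_add_distrib, I1 n hn, I0 n hn]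
  ring

lemma key2 (n : ℕ) (hn : 1 ≤ n) :
    ∑ k ∈ Icc 1 n, ((n - k) * (n - k + 1)) * Ank n k ≤ 3 * Nat.factorial n := by
  have hsplit : ∀ k, ((n - k) * (n - k + 1)) * Ank n k
      = ((n - k) * (n - k - 1)) * Ank n k + 2 * ((n - k) * Ank n k) := by
    intro k
    have : (n - k) * (n - k + 1) = (n - k) * (n - k - 1) + 2 * (n - k) := by
      rcases Nat.eq_zero_or_pos (n - k) with h | h
      · simp [h]
      · obtain ⟨j, hj⟩ : ∃ j, n - k = j + 1 := ⟨n - k - 1, by omega⟩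
        rw [hj, Nat.add_sub_cancel]; ring
    rw [this]; ring
  rw [Finset.sum_congr rfl (fun k _ => hsplit k), Finset.sum_add_distrib, I2 n hn,
    ← Finset.mul_sum, I1 n hn]
  have h1 : (n-1) * Nat.factorial (n-1) ≤ Nat.factorial n := by
    calc (n-1) * Nat.factorial (n-1) ≤ n * Nat.factorial (n-1) :=
          Nat.mul_le_mul_right _ (by omega)
      _ = Nat.factorial n := Nat.mul_factorial_pred (by omega : n ≠ 0)
  have h2 : (n-1) * ((n-2) * Nat.factorial (n-2)) ≤ Nat.factorial n := by
    rcases n with _ | _ | r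
    · simp
    · simp [Nat.factorial]
    · simp only [show r+2-1 = r+1 by omega, show r+2-2 = r by omega]
      calc (r+1) * (r * Nat.factorial r) ≤ (r+1) * ((r+1) * Nat.factorial r) :=
            Nat.mul_le_mul_left _ (Nat.mul_le_mul_right _ (by omega))
        _ = (r+1) * Nat.factorial (r+1) := by rw [Nat.factorial_succ]
        _ ≤ (r+2) * Nat.factorial (r+1) := Nat.mul_le_mul_right _ (by omega)
        _ = Nat.factorial (r+2) := (Nat.factorial_succ _).symm
  calc (n-1) * ((n-2) * Nat.factorial (n-2)) + 2 * ((n-1) * Nat.factorial (n-1))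
      ≤ Nat.factorial n + 2 * Nat.factorial n :=
        add_le_add h2 (Nat.mul_le_mul le_rfl h1)
    _ = 3 * Nat.factorial n := by ring

lemma pow_gap (m : ℕ) {a b : ℝ} (hb : 0 ≤ b) (hba : b ≤ a) :
    a^m - b^m ≤ m * (a-b) * a^(m-1) := by
  induction m with
  | zero => simp
  | succ m ih =>
    rcases Nat.eq_zero_or_pos m with rfl | hm
    · simp
    · have ha : 0 ≤ a := hb.trans hba
      have hbm : b^m ≤ a^m := pow_le_pow_left₀ hb hba _
      have h1 : a*(a^m - b^m) ≤ a*((m:ℝ)*(a-b)*a^(m-1)) :=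
        mul_le_mul_of_nonneg_left ih ha
      have h2 : b^m*(a-b) ≤ a^m*(a-b) :=
        mul_le_mul_of_nonneg_right hbm (sub_nonneg.2 hba)
      have hmm : a^(m-1)*a = a^m := by
        rw [← pow_succ]
        congr 1
        omega
      rw [Nat.add_sub_cancel]
      push_cast
      calc a^(m+1) - b^(m+1) = a*(a^m - b^m) + b^m*(a-b) := by ring
        _ ≤ a*((m:ℝ)*(a-b)*a^(m-1)) + a^m*(a-b) := add_le_add h1 h2
        _ = (m:ℝ)*(a-b)*(a^(m-1)*a) + a^m*(a-b) := by ring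
        _ = (m:ℝ)*(a-b)*a^m + a^m*(a-b) := by rw [hmm]
        _ = ((m:ℝ)+1)*(a-b)*a^m := by ring

lemma cast_pow_lb (ℓ n k : ℕ) (hk : 1 ≤ k) (hkn : k ≤ n) :
    (n:ℝ)^ℓ - (ℓ:ℝ) * ((n-k : ℕ):ℝ) * ((n:ℝ)^ℓ / n) ≤ (k:ℝ)^ℓ := by
  cases ℓ with
  | zero => simp
  | succ m =>
    have hn1 : (1:ℝ) ≤ (n:ℝ) := by exact_mod_cast hk.trans hkn
    have hn0 : (n:ℝ) ≠ 0 := by linarith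
    have h := pow_gap (m+1) (Nat.cast_nonneg k) (by exact_mod_cast hkn : (k:ℝ) ≤ n)
    have hc : ((n-k:ℕ):ℝ) = (n:ℝ) - k := by
      rw [Nat.cast_sub hkn]
    have hnm : (n:ℝ)^(m+1) / n = (n:ℝ)^m := by
      rw [pow_succ]; field_simp
    rw [hc, hnm]
    rw [Nat.add_sub_cancel] at h
    push_cast at h ⊢
    linarith

theorem stmt19 (ℓ : ℕ) :
    ∃ C : ℝ, ∀ n : ℕ, 1 ≤ n →
      |∑ t ∈ Finset.Icc 1 n,
          (∑ k ∈ Finset.Icc 1 t, (Ank n k : ℝ) / (Nat.factorial n)) * (t : ℝ) ^ ℓ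
        - 2 * (n : ℝ) ^ ℓ| ≤ C * (n : ℝ) ^ ((ℓ : ℤ) - 1) := by
  refine ⟨((1 + 3*ℓ : ℕ) : ℝ), ?_⟩
  intro n hn
  have hn0 : (0:ℝ) < n := by exact_mod_cast hn
  have hF : (0:ℝ) < (Nat.factorial n : ℝ) := by exact_mod_cast Nat.factorial_pos n
  set F : ℝ := ((Nat.factorial n : ℕ) : ℝ) with hFdef
  set P : ℝ := (n:ℝ)^ℓ with hPdef
  have hP0 : 0 ≤ P := pow_nonneg hn0.le ℓ
  set S : ℝ := ∑ t ∈ Finset.Icc 1 n,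
      (∑ k ∈ Finset.Icc 1 t, (Ank n k : ℝ) / F) * (t : ℝ) ^ ℓ with hSdef
  -- swap the order of summation
  have hswap : S = ∑ k ∈ Icc 1 n, ∑ t ∈ Icc k n, (Ank n k : ℝ)/F * (t:ℝ)^ℓ := by
    have hc := Finset.sum_Ico_Ico_comm 1 (n+1) (fun k t => (Ank n k : ℝ)/F * (t:ℝ)^ℓ)
    simp only [Finset.Ico_add_one_right_eq_Icc] at hc
    calc S = ∑ t ∈ Icc 1 n, ∑ k ∈ Icc 1 t, (Ank n k : ℝ)/F * (t:ℝ)^ℓ :=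
        Finset.sum_congr rfl fun t _ => Finset.sum_mul _ _ _
      _ = _ := hc.symm
  have hq : ∀ k, 0 ≤ (Ank n k : ℝ)/F := fun k => div_nonneg (Nat.cast_nonneg _) hF.le
  -- upper bound for inner sums
  have hub : ∀ k ∈ Icc 1 n, ∑ t ∈ Icc k n, (t:ℝ)^ℓ ≤ ((n-k+1:ℕ):ℝ) * P := by
    intro k hk
    obtain ⟨hk1, hkn⟩ := Finset.mem_Icc.1 hk
    have h := Finset.sum_le_card_nsmul (Icc k n) (fun t => (t:ℝ)^ℓ) P
      (fun t ht => by
        have htn : t ≤ n := (Finset.mem_Icc.1 ht).2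
        exact pow_le_pow_left₀ (Nat.cast_nonneg t) (by exact_mod_cast htn) ℓ)
    rwa [Nat.card_Icc, show n + 1 - k = n - k + 1 by omega, nsmul_eq_mul] at h
  -- lower bound for inner sums
  have hlb : ∀ k ∈ Icc 1 n,
      ((n-k+1:ℕ):ℝ) * (P - (ℓ:ℝ) * ((n-k:ℕ):ℝ) * (P/n)) ≤ ∑ t ∈ Icc k n, (t:ℝ)^ℓ := by
    intro k hk
    obtain ⟨hk1, hkn⟩ := Finset.mem_Icc.1 hk
    have h := Finset.card_nsmul_le_sum (Icc k n) (fun t => (t:ℝ)^ℓ)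
      (P - (ℓ:ℝ) * ((n-k:ℕ):ℝ) * (P/n))
      (fun t ht => by
        obtain ⟨htk, htn⟩ := Finset.mem_Icc.1 ht
        have h1 : (k:ℝ)^ℓ ≤ (t:ℝ)^ℓ :=
          pow_le_pow_left₀ (Nat.cast_nonneg k) (by exact_mod_cast htk) ℓ
        have h2 := cast_pow_lb ℓ n k hk1 hkn
        rw [hPdef]
        linarith)
    rwa [Nat.card_Icc, show n + 1 - k = n - k + 1 by omega, nsmul_eq_mul] at h
  -- identities for the weighted sums (cast to ℝ)
  have hID1 : ∑ k ∈ Icc 1 n, ((n-k+1:ℕ):ℝ) * (Ank n k : ℝ)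
      = F + ((n-1:ℕ):ℝ) * ((Nat.factorial (n-1) : ℕ):ℝ) := by
    have h := key1 n hn
    calc ∑ k ∈ Icc 1 n, ((n-k+1:ℕ):ℝ) * (Ank n k : ℝ)
        = ((∑ k ∈ Icc 1 n, (n - k + 1) * Ank n k : ℕ) : ℝ) := by push_cast; rfl
      _ = _ := by rw [h]; push_cast [hFdef]; ring
  have hID2 : ∑ k ∈ Icc 1 n, ((n-k:ℕ):ℝ) * (((n-k+1:ℕ):ℝ) * (Ank n k : ℝ)) ≤ 3 * F := by
    have h := key2 n hn
    calc ∑ k ∈ Icc 1 n, ((n-k:ℕ):ℝ) * (((n-k+1:ℕ):ℝ) * (Ank n k : ℝ))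
        = ((∑ k ∈ Icc 1 n, ((n - k) * (n - k + 1)) * Ank n k : ℕ) : ℝ) := by
          rw [Nat.cast_sum]
          exact Finset.sum_congr rfl fun k _ => by push_cast; ring
      _ ≤ ((3 * Nat.factorial n : ℕ) : ℝ) := by exact_mod_cast h
      _ = 3 * F := by push_cast [hFdef]; ring
  -- factorial relation
  have hFn : F = (n:ℝ) * ((Nat.factorial (n-1) : ℕ):ℝ) := by
    rw [hFdef, ← Nat.mul_factorial_pred (by omega : n ≠ 0)]
    push_cast
    ring
  have hcast1 : ((n-1:ℕ):ℝ) = (n:ℝ) - 1 := by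
    rw [Nat.cast_sub hn]; norm_num
  set f1 : ℝ := ((Nat.factorial (n-1) : ℕ):ℝ) with hf1
  have hf10 : 0 < f1 := by rw [hf1]; exact_mod_cast Nat.factorial_pos (n-1)
  -- main value
  have hmain : (P/F) * (∑ k ∈ Icc 1 n, ((n-k+1:ℕ):ℝ) * (Ank n k : ℝ)) = 2*P - P/n := by
    rw [hID1, hcast1, hFn]
    field_simp
    ring
  -- upper bound for S
  have hupper : S - 2*P ≤ -(P/n) := by
    have h1 : S ≤ ∑ k ∈ Icc 1 n, (Ank n k : ℝ)/F * (((n-k+1:ℕ):ℝ) * P) := by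
      rw [hswap]
      apply Finset.sum_le_sum
      intro k hk
      rw [← Finset.mul_sum]
      exact mul_le_mul_of_nonneg_left (hub k hk) (hq k)
    have h2 : ∑ k ∈ Icc 1 n, (Ank n k : ℝ)/F * (((n-k+1:ℕ):ℝ) * P)
        = (P/F) * (∑ k ∈ Icc 1 n, ((n-k+1:ℕ):ℝ) * (Ank n k : ℝ)) := by
      rw [Finset.mul_sum]
      apply Finset.sum_congr rfl
      intro k _
      field_simp
      try ring
    rw [h2, hmain] at h1
    linarith
  -- lower bound for S
  have hlower : -(P/n) - 3*(ℓ:ℝ)*(P/n) ≤ S - 2*P := by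
    have h1 : ∑ k ∈ Icc 1 n, (Ank n k : ℝ)/F *
        (((n-k+1:ℕ):ℝ) * (P - (ℓ:ℝ) * ((n-k:ℕ):ℝ) * (P/n))) ≤ S := by
      rw [hswap]
      apply Finset.sum_le_sum
      intro k hk
      rw [← Finset.mul_sum]
      exact mul_le_mul_of_nonneg_left (hlb k hk) (hq k)
    have h2 : ∑ k ∈ Icc 1 n, (Ank n k : ℝ)/F *
        (((n-k+1:ℕ):ℝ) * (P - (ℓ:ℝ) * ((n-k:ℕ):ℝ) * (P/n)))
        = (P/F) * (∑ k ∈ Icc 1 n, ((n-k+1:ℕ):ℝ) * (Ank n k : ℝ))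
          - ((ℓ:ℝ) * (P/n) / F) *
            (∑ k ∈ Icc 1 n, ((n-k:ℕ):ℝ) * (((n-k+1:ℕ):ℝ) * (Ank n k : ℝ))) := by
      rw [Finset.mul_sum, Finset.mul_sum, ← Finset.sum_sub_distrib]
      apply Finset.sum_congr rfl
      intro k _
      field_simp
      try ring
    have h3 : ((ℓ:ℝ) * (P/n) / F) *
        (∑ k ∈ Icc 1 n, ((n-k:ℕ):ℝ) * (((n-k+1:ℕ):ℝ) * (Ank n k : ℝ))) ≤
        ((ℓ:ℝ) * (P/n) / F) * (3 * F) := by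
      apply mul_le_mul_of_nonneg_left hID2
      positivity
    have h4 : ((ℓ:ℝ) * (P/n) / F) * (3 * F) = 3*(ℓ:ℝ)*(P/n) := by
      field_simp
      try ring
    rw [h2, hmain] at h1
    rw [h4] at h3
    linarith
  -- conclude
  have habs : |S - 2*P| ≤ (1 + 3*(ℓ:ℝ)) * (P/n) := by
    rw [abs_le]
    constructor
    · have : (0:ℝ) ≤ P/n := div_nonneg hP0 hn0.le
      nlinarith [hlower]
    · have h0 : (0:ℝ) ≤ 3*(ℓ:ℝ)*(P/n) := by positivity
      have : (0:ℝ) ≤ P/n := div_nonneg hP0 hn0.le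
      nlinarith [hupper]
  have hz : (n : ℝ) ^ ((ℓ : ℤ) - 1) = P/n := by
    rw [zpow_sub₀ hn0.ne', zpow_natCast, zpow_one, hPdef]
  calc |S - 2*P| ≤ (1 + 3*(ℓ:ℝ)) * (P/n) := habs
    _ = ((1 + 3*ℓ : ℕ) : ℝ) * (n : ℝ) ^ ((ℓ : ℤ) - 1) := by rw [hz]; push_cast; ring
end
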